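/- arXiv:1210.7844 — 8 statements merged into one kernel-verified Lean document; each statement's English description precedes it below -/
import Mathlib

section
/- Let c ≥ 2 be an integer, let A ∈ ℂ^{n×n} be a Hermitian matrix that is colorable with c colors, and let B ∈ ℂ^{n×n} be an arbitrary real diagonal matrix. Then λ_max(B − A) ≥ λ_max(B + (1/(c−1))·A). -/
open Matrix Finset Complex

private lemma rayleigh_le {n : ℕ} {M : Matrix (Fin n) (Fin n) ℂ} (hM : M.IsHermitian)
    {t : ℝ} (ht : ∀ i, hM.eigenvalues i ≤ t) (z : Fin n → ℂ) :
    (dotProduct (star z) (M *ᵥ z)).re ≤ t * (dotProduct (star z) z).re := by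
  classical
  set v : EuclideanSpace ℂ (Fin n) := (WithLp.equiv 2 _).symm z with hv
  set b := hM.eigenvectorBasis with hb
  have hsym := (Matrix.isHermitian_iff_isSymmetric).1 hM
  set T := Matrix.toEuclideanLin M with hT
  have hTv : (inner ℂ v (T v) : ℂ) = dotProduct (star z) (M *ᵥ z) := by
    exact dotProduct_comm _ _
  have hVv : (inner ℂ v v : ℂ) = dotProduct (star z) z := by
    exact dotProduct_comm _ _
  have hTb : ∀ i, T (b i) = ((hM.eigenvalues i : ℝ) : ℂ) • b i := by
    intro i
    have h1 := hM.mulVec_eigenvectorBasis i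
    rw [hT, Matrix.toEuclideanLin_apply]
    apply (WithLp.equiv 2 (Fin n → ℂ)).injective
    show M *ᵥ (WithLp.equiv 2 (Fin n → ℂ)) (b i) = _
    rw [show (WithLp.equiv 2 (Fin n → ℂ)) (b i) = ⇑(b i) from rfl, h1]
    ext k
    simp [Complex.real_smul, hb]
  have key : (inner ℂ v (T v) : ℂ)
      = ((∑ i, hM.eigenvalues i * Complex.normSq (inner ℂ (b i) v : ℂ) : ℝ) : ℂ) := by
    rw [← OrthonormalBasis.sum_inner_mul_inner b v (T v)]
    push_cast
    apply Finset.sum_congr rfl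
    intro i _
    have h2 : (inner ℂ (b i) (T v) : ℂ) = inner ℂ (T (b i)) v := (hsym (b i) v).symm
    rw [h2, hTb i, inner_smul_left, Complex.conj_ofReal]
    rw [← inner_conj_symm v (b i), Complex.normSq_eq_conj_mul_self]
    ring
  have keyv : (inner ℂ v v : ℂ)
      = ((∑ i, Complex.normSq (inner ℂ (b i) v : ℂ) : ℝ) : ℂ) := by
    rw [← OrthonormalBasis.sum_inner_mul_inner b v v]
    push_cast
    apply Finset.sum_congr rfl
    intro i _
    rw [← inner_conj_symm v (b i), Complex.normSq_eq_conj_mul_self]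
  rw [← hTv, ← hVv, key, keyv, Complex.ofReal_re, Complex.ofReal_re, Finset.mul_sum]
  apply Finset.sum_le_sum
  intro i _
  exact mul_le_mul_of_nonneg_right (ht i) (Complex.normSq_nonneg _)

private lemma sum_phases {c : ℕ} (hc : 2 ≤ c) {ζ : ℂ} (hζ : IsPrimitiveRoot ζ c)
    {a b : Fin c} (hab : a ≠ b) :
    ∑ s ∈ Finset.range c, (starRingEnd ℂ) (ζ ^ (s * (a : ℕ))) * ζ ^ (s * (b : ℕ)) = 0 := by
  have hc0 : c ≠ 0 := by omega
  have hnorm : ‖ζ‖ = 1 := hζ.norm'_eq_one hc0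
  have hζ0 : ζ ≠ 0 := by
    intro h; rw [h] at hnorm; simp at hnorm
  have hconj : (starRingEnd ℂ) ζ = ζ⁻¹ := (Complex.inv_eq_conj hnorm).symm
  set w : ℂ := (ζ⁻¹) ^ (a : ℕ) * ζ ^ (b : ℕ) with hw
  have hterm : ∀ s ∈ Finset.range c,
      (starRingEnd ℂ) (ζ ^ (s * (a : ℕ))) * ζ ^ (s * (b : ℕ)) = w ^ s := by
    intro s _
    rw [map_pow, hconj, hw, mul_pow, ← pow_mul, ← pow_mul,
      Nat.mul_comm (a : ℕ) s, Nat.mul_comm (b : ℕ) s]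
  rw [Finset.sum_congr rfl hterm]
  have hw1 : w ≠ 1 := by
    intro h
    apply hab
    have hba : ζ ^ (b : ℕ) = ζ ^ (a : ℕ) := by
      have h2 := congrArg (· * ζ ^ (a : ℕ)) h
      simp only [hw, one_mul] at h2
      rw [mul_assoc, mul_comm (ζ ^ (b:ℕ)), ← mul_assoc, ← mul_pow,
        inv_mul_cancel₀ hζ0, one_pow, one_mul] at h2
      exact h2
    exact (Fin.ext (hζ.pow_inj b.isLt a.isLt hba)).symm
  have hwc : w ^ c = 1 := by
    have h1 : w ^ c = ((ζ ^ c)⁻¹) ^ (a : ℕ) * (ζ ^ c) ^ (b : ℕ) := by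
      rw [hw, mul_pow, ← pow_mul, ← pow_mul, inv_pow, inv_pow, ← pow_mul, ← pow_mul,
        Nat.mul_comm (a : ℕ) c, Nat.mul_comm (b : ℕ) c]
    rw [h1, hζ.pow_eq_one]
    simp
  rw [geom_sum_eq hw1, hwc, sub_self, zero_div]

/-- **Nikiforov's theorem.** If the Hermitian matrix `A` is colorable with `c ≥ 2` colors
and `B` is a real diagonal matrix, then `λ_max (B - A) ≥ λ_max (B + (1/(c-1)) • A)`.
Here `μ` (resp. `ν`) is the non-increasing enumeration of the eigenvalues of `B - A`
(resp. `B + (1/(c-1)) • A`), so that the maximum eigenvalue is the value at index `0`. -/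
theorem stmt_0 {n : ℕ} (hn : 0 < n) (c : ℕ) (hc : 2 ≤ c)
    (A B : Matrix (Fin n) (Fin n) ℂ) (hA : A.IsHermitian)
    (f : Fin n → Fin c) (hf : ∀ k l : Fin n, f k = f l → A k l = 0)
    (b : Fin n → ℝ) (hB : B = Matrix.diagonal fun i => (b i : ℂ))
    (hBmA : (B - A).IsHermitian)
    (hBpA : (B + ((c : ℂ) - 1)⁻¹ • A).IsHermitian)
    (μ ν : Fin n → ℝ)
    (hμa : Antitone μ) (hμ : ∃ e : Equiv.Perm (Fin n), μ = hBmA.eigenvalues ∘ e)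
    (hνa : Antitone ν) (hν : ∃ e : Equiv.Perm (Fin n), ν = hBpA.eigenvalues ∘ e) :
    μ ⟨0, hn⟩ ≥ ν ⟨0, hn⟩ := by
  classical
  obtain ⟨e, he⟩ := hμ
  obtain ⟨e', he'⟩ := hν
  have hc0 : c ≠ 0 := by omega
  have hcR : (2 : ℝ) ≤ (c : ℝ) := by exact_mod_cast hc
  -- μ₀ dominates all eigenvalues of B - A
  have hμmax : ∀ i, hBmA.eigenvalues i ≤ μ ⟨0, hn⟩ := by
    intro i
    have h0 : (⟨0, hn⟩ : Fin n) ≤ e.symm i := by simp [Fin.le_def]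
    have h1 := hμa h0
    have h2 : μ (e.symm i) = hBmA.eigenvalues i := by
      rw [he]; simp
    rw [h2] at h1
    exact h1
  -- ν₀ is an eigenvalue of B + t A with unit eigenvector xf
  set i0 : Fin n := e' ⟨0, hn⟩ with hi0
  have hν0 : ν ⟨0, hn⟩ = hBpA.eigenvalues i0 := by rw [he']; rfl
  set xf : Fin n → ℂ := ⇑(hBpA.eigenvectorBasis i0) with hxf
  have hxe : (B + ((c : ℂ) - 1)⁻¹ • A) *ᵥ xf = hBpA.eigenvalues i0 • xf :=
    hBpA.mulVec_eigenvectorBasis i0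
  have hxnorm : dotProduct (star xf) xf = 1 := by
    have h1 : ‖hBpA.eigenvectorBasis i0‖ = 1 := hBpA.eigenvectorBasis.orthonormal.1 i0
    have h2 : (inner ℂ (hBpA.eigenvectorBasis i0) (hBpA.eigenvectorBasis i0) : ℂ)
        = dotProduct (star xf) xf := dotProduct_comm _ _
    rw [← h2, inner_self_eq_norm_sq_to_K, h1]
    norm_num
  -- roots of unity
  set ζ : ℂ := Complex.exp (2 * Real.pi * Complex.I / c) with hζd
  have hζ : IsPrimitiveRoot ζ c := Complex.isPrimitiveRoot_exp c hc0
  have hnormζ : ‖ζ‖ = 1 := hζ.norm'_eq_one hc0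
  have hζ0 : ζ ≠ 0 := by intro h; rw [h] at hnormζ; simp at hnormζ
  have hconjζ : (starRingEnd ℂ) ζ * ζ = 1 := by
    rw [← Complex.inv_eq_conj hnormζ, inv_mul_cancel₀ hζ0]
  have hpp : ∀ m : ℕ, (starRingEnd ℂ) (ζ ^ m) * ζ ^ m = 1 := by
    intro m; rw [map_pow, ← mul_pow, hconjζ, one_pow]
  -- twisted vectors
  set zv : ℕ → Fin n → ℂ := fun s k => ζ ^ (s * (f k : ℕ)) * xf k with hzv
  have hz0 : zv 0 = xf := by funext k; simp [hzv]
  have hzz : ∀ s, dotProduct (star (zv s)) (zv s) = 1 := by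
    intro s
    rw [← hxnorm]
    simp only [dotProduct, Pi.star_apply, hzv, RCLike.star_def, _root_.map_mul]
    apply Finset.sum_congr rfl
    intro k _
    have h3 := hpp (s * (f k : ℕ))
    linear_combination ((starRingEnd ℂ) (xf k) * xf k) * h3
  have hBq : ∀ s, dotProduct (star (zv s)) (B *ᵥ (zv s))
      = dotProduct (star xf) (B *ᵥ xf) := by
    intro s
    simp only [hB, dotProduct, Matrix.mulVec_diagonal, Pi.star_apply, hzv,
      RCLike.star_def, _root_.map_mul]
    apply Finset.sum_congr rfl
    intro k _
    have h3 := hpp (s * (f k : ℕ))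
    linear_combination ((b k : ℂ) * ((starRingEnd ℂ) (xf k) * xf k)) * h3
  -- the cancellation over all phases
  have hkey : ∀ k l : Fin n, ∑ s ∈ Finset.range c,
      (starRingEnd ℂ) (zv s k) * (A k l * zv s l) = 0 := by
    intro k l
    by_cases hkl : f k = f l
    · simp [hf k l hkl]
    · have hsum := sum_phases hc hζ hkl
      calc ∑ s ∈ Finset.range c, (starRingEnd ℂ) (zv s k) * (A k l * zv s l)
          = ∑ s ∈ Finset.range c, ((starRingEnd ℂ) (ζ ^ (s * (f k : ℕ))) * ζ ^ (s * (f l : ℕ)))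
              * ((starRingEnd ℂ) (xf k) * (A k l * xf l)) := by
            refine Finset.sum_congr rfl fun s _ => ?_
            simp only [hzv, _root_.map_mul]
            ring
        _ = 0 := by rw [← Finset.sum_mul, hsum, zero_mul]
  have hAsum : ∑ s ∈ Finset.range c, dotProduct (star (zv s)) (A *ᵥ (zv s)) = 0 := by
    have hexp : ∀ z : Fin n → ℂ, dotProduct (star z) (A *ᵥ z)
        = ∑ k, ∑ l, (starRingEnd ℂ) (z k) * (A k l * z l) := by
      intro z
      simp [dotProduct, Matrix.mulVec, Finset.mul_sum, RCLike.star_def]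
    calc ∑ s ∈ Finset.range c, dotProduct (star (zv s)) (A *ᵥ (zv s))
        = ∑ s ∈ Finset.range c, ∑ k, ∑ l, (starRingEnd ℂ) (zv s k) * (A k l * zv s l) :=
          Finset.sum_congr rfl fun s _ => hexp (zv s)
      _ = ∑ k, ∑ s ∈ Finset.range c, ∑ l, (starRingEnd ℂ) (zv s k) * (A k l * zv s l) :=
          Finset.sum_comm
      _ = ∑ k, ∑ l, ∑ s ∈ Finset.range c, (starRingEnd ℂ) (zv s k) * (A k l * zv s l) :=
          Finset.sum_congr rfl fun k _ => Finset.sum_comm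
      _ = 0 := by simp [hkey]
  -- eigen-equation
  set qB : ℂ := dotProduct (star xf) (B *ᵥ xf) with hqBd
  set qA : ℂ := dotProduct (star xf) (A *ᵥ xf) with hqAd
  have heig : qB + ((c : ℂ) - 1)⁻¹ * qA = ((ν ⟨0, hn⟩ : ℝ) : ℂ) := by
    have h1 : dotProduct (star xf) ((B + ((c : ℂ) - 1)⁻¹ • A) *ᵥ xf)
        = ((hBpA.eigenvalues i0 : ℝ) : ℂ) := by
      rw [hxe, dotProduct_smul, hxnorm]
      simp [Complex.real_smul]
    rw [Matrix.add_mulVec, dotProduct_add, Matrix.smul_mulVec,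
      dotProduct_smul, smul_eq_mul] at h1
    rw [← hqBd, ← hqAd] at h1
    rw [h1, hν0]
  have hcond : ((c : ℂ) - 1) ≠ 0 := by
    intro h
    have h1 : (c : ℂ) = 1 := by linear_combination h
    have : c = 1 := by exact_mod_cast h1
    omega
  -- sum over nonzero phases
  set S : Finset ℕ := (Finset.range c).erase 0 with hSd
  have h0mem : (0 : ℕ) ∈ Finset.range c := Finset.mem_range.mpr (by omega)
  have hscard : S.card = c - 1 := by
    rw [hSd, Finset.card_erase_of_mem h0mem, Finset.card_range]
  have hAsub : ∑ s ∈ S, dotProduct (star (zv s)) (A *ᵥ (zv s)) = -qA := by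
    have h4 := Finset.add_sum_erase (Finset.range c)
      (fun s => dotProduct (star (zv s)) (A *ᵥ (zv s))) h0mem
    simp only [hAsum, hz0, ← hSd] at h4
    rw [hqAd]
    linear_combination h4
  have hcast : ((c - 1 : ℕ) : ℂ) = (c : ℂ) - 1 := by
    push_cast [Nat.cast_sub (by omega : 1 ≤ c)]
    ring
  have hSsum : ∑ s ∈ S, dotProduct (star (zv s)) ((B - A) *ᵥ (zv s))
      = ((c : ℂ) - 1) * ((ν ⟨0, hn⟩ : ℝ) : ℂ) := by
    have hdec : ∀ s ∈ S, dotProduct (star (zv s)) ((B - A) *ᵥ (zv s))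
        = qB - dotProduct (star (zv s)) (A *ᵥ (zv s)) := by
      intro s _
      rw [Matrix.sub_mulVec, dotProduct_sub, hBq s]
    rw [Finset.sum_congr rfl hdec, Finset.sum_sub_distrib, hAsub, Finset.sum_const, hscard,
      nsmul_eq_mul, hcast, sub_neg_eq_add]
    calc ((c : ℂ) - 1) * qB + qA
        = ((c : ℂ) - 1) * (qB + ((c : ℂ) - 1)⁻¹ * qA) := by
          rw [mul_add, ← mul_assoc, mul_inv_cancel₀ hcond, one_mul]
      _ = ((c : ℂ) - 1) * ((ν ⟨0, hn⟩ : ℝ) : ℂ) := by rw [heig]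
  -- Rayleigh bounds
  have hray : ∀ s ∈ S, (dotProduct (star (zv s)) ((B - A) *ᵥ (zv s))).re ≤ μ ⟨0, hn⟩ := by
    intro s _
    have h5 := rayleigh_le hBmA hμmax (zv s)
    rw [hzz s] at h5
    simpa using h5
  have hre : ((c : ℝ) - 1) * ν ⟨0, hn⟩
      = ∑ s ∈ S, (dotProduct (star (zv s)) ((B - A) *ᵥ (zv s))).re := by
    have h6 := congrArg Complex.re hSsum
    rw [Complex.re_sum] at h6
    rw [h6]
    have : ((c : ℂ) - 1) = (((c : ℝ) - 1 : ℝ) : ℂ) := by push_cast; ring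
    rw [this, ← Complex.ofReal_mul, Complex.ofReal_re]
  have hfinal : ((c : ℝ) - 1) * ν ⟨0, hn⟩ ≤ ((c : ℝ) - 1) * μ ⟨0, hn⟩ := by
    rw [hre]
    calc ∑ s ∈ S, (dotProduct (star (zv s)) ((B - A) *ᵥ (zv s))).re
        ≤ ∑ _s ∈ S, μ ⟨0, hn⟩ := Finset.sum_le_sum hray
      _ = ((c : ℝ) - 1) * μ ⟨0, hn⟩ := by
          rw [Finset.sum_const, hscard, nsmul_eq_mul]
          congr 1
          push_cast [Nat.cast_sub (by omega : 1 ≤ c)]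
          ring
  have hpos : (0 : ℝ) < (c : ℝ) - 1 := by linarith
  exact le_of_mul_le_mul_left hfinal hpos
end

section
/- Let c ≥ 2 be an integer, let A ∈ ℂ^{n×n} be a Hermitian matrix that is colorable with c colors, and let B ∈ ℂ^{n×n} be an arbitrary real diagonal matrix. Then λ_max(B − A) ≥ λ_max(B + A) − ((c−2)/(c−1))·λ_max(A). -/
open Matrix in
theorem aux_rayleigh {n : ℕ} (M : Matrix (Fin n) (Fin n) ℂ) (hM : M.IsHermitian) (m : ℝ)
    (hm : ∀ i, hM.eigenvalues i ≤ m) (y : Fin n → ℂ) :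
    (star y ⬝ᵥ M *ᵥ y).re ≤ m * (star y ⬝ᵥ y).re := by
  set U : Matrix (Fin n) (Fin n) ℂ := (hM.eigenvectorUnitary : Matrix (Fin n) (Fin n) ℂ) with hU
  have hUU : U * Uᴴ = 1 := Matrix.mem_unitaryGroup_iff.mp hM.eigenvectorUnitary.2
  have hM' : M = U * diagonal (RCLike.ofReal ∘ hM.eigenvalues) * Uᴴ := hM.spectral_theorem
  set z : Fin n → ℂ := Uᴴ *ᵥ y with hz
  have hstarz : star z = star y ᵥ* U := by
    rw [hz, star_mulVec, conjTranspose_conjTranspose]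
  have hzy : star z ⬝ᵥ z = star y ⬝ᵥ y := by
    rw [hstarz, hz, ← dotProduct_mulVec, mulVec_mulVec, hUU, one_mulVec]
  have key : star y ⬝ᵥ M *ᵥ y = star z ⬝ᵥ (diagonal (RCLike.ofReal ∘ hM.eigenvalues)) *ᵥ z := by
    rw [hstarz, hz, ← dotProduct_mulVec, mulVec_mulVec, mulVec_mulVec, ← hM']
  rw [key, ← hzy]
  simp only [dotProduct, mulVec_diagonal, Complex.re_sum, Finset.mul_sum]
  apply Finset.sum_le_sum
  intro i _
  have h1 : star z i * ((RCLike.ofReal ∘ hM.eigenvalues) i * z i)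
      = ((hM.eigenvalues i * Complex.normSq (z i) : ℝ) : ℂ) := by
    simp [Pi.star_apply, Complex.normSq_eq_conj_mul_self]
    ring
  have h2 : star z i * z i = ((Complex.normSq (z i) : ℝ) : ℂ) := by
    simp [Pi.star_apply, Complex.normSq_eq_conj_mul_self]
  rw [h1, h2, Complex.ofReal_re, Complex.ofReal_re]
  exact mul_le_mul_of_nonneg_right (hm i) (Complex.normSq_nonneg _)

theorem aux_conj_mul (c : ℕ) :
    (starRingEnd ℂ) (Complex.exp (2 * Real.pi * Complex.I / c))
      * Complex.exp (2 * Real.pi * Complex.I / c) = 1 := by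
  have hconj : (starRingEnd ℂ) (Complex.exp (2 * Real.pi * Complex.I / c))
      = Complex.exp (-(2 * Real.pi * Complex.I / c)) := by
    rw [← Complex.exp_conj]
    congr 1
    simp [map_div₀, _root_.map_mul, Complex.conj_I, Complex.conj_ofReal, map_ofNat]
    ring
  rw [hconj, ← Complex.exp_add]
  simp

theorem aux_root_sum (c : ℕ) (hc : 2 ≤ c) (a b : ℕ) (ha : a < c) (hb : b < c) (hab : a ≠ b) :
    ∑ k ∈ Finset.range c, ((starRingEnd ℂ) (Complex.exp (2 * Real.pi * Complex.I / c) ^ a)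
      * Complex.exp (2 * Real.pi * Complex.I / c) ^ b) ^ k = 0 := by
  set ω : ℂ := Complex.exp (2 * Real.pi * Complex.I / c) with hω
  have hprim : IsPrimitiveRoot ω c := Complex.isPrimitiveRoot_exp c (by omega)
  have hωc : ω ^ c = 1 := hprim.pow_eq_one
  have hunit : (starRingEnd ℂ) ω * ω = 1 := aux_conj_mul c
  set ζ : ℂ := (starRingEnd ℂ) (ω ^ a) * ω ^ b with hζ
  have hac : (ω ^ a) ^ c = 1 := by rw [← pow_mul, mul_comm, pow_mul, hωc, one_pow]
  have hbc : (ω ^ b) ^ c = 1 := by rw [← pow_mul, mul_comm, pow_mul, hωc, one_pow]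
  have hζc : ζ ^ c = 1 := by
    rw [hζ, mul_pow, ← map_pow, hac, hbc, _root_.map_one, one_mul]
  have hζ1 : ζ ≠ 1 := by
    intro h
    have huna : (starRingEnd ℂ) (ω ^ a) * ω ^ a = 1 := by
      rw [map_pow, ← mul_pow, hunit, one_pow]
    have : ω ^ b = ω ^ a := by
      calc ω ^ b = ((starRingEnd ℂ) (ω ^ a) * ω ^ a) * ω ^ b := by rw [huna, one_mul]
        _ = ω ^ a * ζ := by rw [hζ]; ring
        _ = ω ^ a := by rw [h, mul_one]
    exact hab (hprim.pow_inj ha hb this.symm)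
  rw [geom_sum_eq hζ1, hζc, sub_self, zero_div]

open Matrix in
/-- If the Hermitian matrix `A` is colorable with `c ≥ 2` colors and `B` is a real diagonal
matrix, then `λ_max (B - A) ≥ λ_max (B + A) - ((c-2)/(c-1)) · λ_max A`.
Here `μ`, `ν`, `α` are the non-increasing enumerations of the eigenvalues of
`B - A`, `B + A` and `A` respectively, so the maximum eigenvalue is the value at index `0`. -/
theorem stmt_1 {n : ℕ} (hn : 0 < n) (c : ℕ) (hc : 2 ≤ c)
    (A B : Matrix (Fin n) (Fin n) ℂ) (hA : A.IsHermitian)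
    (f : Fin n → Fin c) (hf : ∀ k l : Fin n, f k = f l → A k l = 0)
    (b : Fin n → ℝ) (hB : B = Matrix.diagonal fun i => (b i : ℂ))
    (hBmA : (B - A).IsHermitian) (hBpA : (B + A).IsHermitian)
    (μ ν α : Fin n → ℝ)
    (hμa : Antitone μ) (hμ : ∃ e : Equiv.Perm (Fin n), μ = hBmA.eigenvalues ∘ e)
    (hνa : Antitone ν) (hν : ∃ e : Equiv.Perm (Fin n), ν = hBpA.eigenvalues ∘ e)
    (hαa : Antitone α) (hα : ∃ e : Equiv.Perm (Fin n), α = hA.eigenvalues ∘ e) :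
    μ ⟨0, hn⟩ ≥ ν ⟨0, hn⟩ - (((c : ℝ) - 2) / ((c : ℝ) - 1)) * α ⟨0, hn⟩ := by
  obtain ⟨eμ, hμe⟩ := hμ
  obtain ⟨eν, hνe⟩ := hν
  obtain ⟨eα, hαe⟩ := hα
  have hμmax : ∀ j, hBmA.eigenvalues j ≤ μ ⟨0, hn⟩ := by
    intro j
    have h1 : μ (eμ.symm j) = hBmA.eigenvalues j := by
      rw [hμe]; simp
    rw [← h1]; exact hμa (by simp [Fin.le_def])
  have hαmax : ∀ j, hA.eigenvalues j ≤ α ⟨0, hn⟩ := by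
    intro j
    have h1 : α (eα.symm j) = hA.eigenvalues j := by
      rw [hαe]; simp
    rw [← h1]; exact hαa (by simp [Fin.le_def])
  set i₀ : Fin n := eν ⟨0, hn⟩ with hi₀
  have hν0 : ν ⟨0, hn⟩ = hBpA.eigenvalues i₀ := by rw [hνe]; rfl
  set x : Fin n → ℂ := ⇑(hBpA.eigenvectorBasis i₀) with hx
  have hxunit : star x ⬝ᵥ x = 1 := by
    have h := orthonormal_iff_ite.mp hBpA.eigenvectorBasis.orthonormal i₀ i₀
    rw [if_pos rfl] at h
    rw [← h, EuclideanSpace.inner_eq_star_dotProduct, dotProduct_comm]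
  have hxeig : (B + A) *ᵥ x = hBpA.eigenvalues i₀ • x := hBpA.mulVec_eigenvectorBasis i₀
  set ω : ℂ := Complex.exp (2 * Real.pi * Complex.I / c) with hω
  set Y : ℕ → Fin n → ℂ := fun k v => ω ^ (k * (f v : ℕ)) * x v with hY
  have hY0 : Y 0 = x := by funext v; simp [hY]
  have hunit : (starRingEnd ℂ) ω * ω = 1 := aux_conj_mul c
  have hpow1 : ∀ m : ℕ, (starRingEnd ℂ) (ω ^ m) * ω ^ m = 1 := fun m => by
    rw [map_pow, ← mul_pow, hunit, one_pow]
  have hBY : ∀ k, star (Y k) ⬝ᵥ B *ᵥ (Y k) = star x ⬝ᵥ B *ᵥ x := by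
    intro k
    rw [hB]
    simp only [dotProduct, mulVec_diagonal]
    apply Finset.sum_congr rfl
    intro v _
    have h1 : star (Y k v) * ((b v : ℂ) * Y k v)
        = ((starRingEnd ℂ) (ω ^ (k * (f v : ℕ))) * ω ^ (k * (f v : ℕ)))
          * (star (x v) * ((b v : ℂ) * x v)) := by
      simp only [hY, Complex.star_def, _root_.map_mul]
      ring
    rw [Pi.star_apply, Pi.star_apply, h1, hpow1, one_mul]
  have hYunit : ∀ k, star (Y k) ⬝ᵥ (Y k) = 1 := by
    intro k
    rw [← hxunit]
    simp only [dotProduct]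
    apply Finset.sum_congr rfl
    intro v _
    have h1 : star (Y k v) * Y k v
        = ((starRingEnd ℂ) (ω ^ (k * (f v : ℕ))) * ω ^ (k * (f v : ℕ)))
          * (star (x v) * x v) := by
      simp only [hY, Complex.star_def, _root_.map_mul]
      ring
    rw [Pi.star_apply, Pi.star_apply, h1, hpow1, one_mul]
  have hAY : ∑ k ∈ Finset.range c, star (Y k) ⬝ᵥ A *ᵥ (Y k) = 0 := by
    have swap : ∑ k ∈ Finset.range c, star (Y k) ⬝ᵥ A *ᵥ (Y k)
        = ∑ u, ∑ v, ∑ k ∈ Finset.range c, star (Y k) u * (A u v * Y k v) := by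
      simp only [dotProduct, mulVec, Finset.mul_sum]
      rw [Finset.sum_comm]
      apply Finset.sum_congr rfl
      intro u _
      rw [Finset.sum_comm]
    rw [swap]
    apply Finset.sum_eq_zero; intro u _
    apply Finset.sum_eq_zero; intro v _
    by_cases hfe : f u = f v
    · simp [hf u v hfe]
    · have hterm : ∀ k, star (Y k) u * (A u v * Y k v)
          = (star (x u) * (A u v * x v))
            * (((starRingEnd ℂ) (ω ^ (f u : ℕ)) * ω ^ (f v : ℕ)) ^ k) := by
        intro k
        simp only [hY, Pi.star_apply, Complex.star_def, _root_.map_mul, map_pow, mul_pow,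
          pow_mul']
        ring
      simp only [hterm]
      rw [← Finset.mul_sum,
        aux_root_sum c hc (f u) (f v) (f u).isLt (f v).isLt (fun h => hfe (Fin.val_injective h)),
        mul_zero]
  have hxBpA : star x ⬝ᵥ (B + A) *ᵥ x = ((ν ⟨0, hn⟩ : ℝ) : ℂ) := by
    rw [hxeig, dotProduct_smul, hxunit, hν0]
    simp [Complex.real_smul]
  have hsplit : star x ⬝ᵥ B *ᵥ x + star x ⬝ᵥ A *ᵥ x = ((ν ⟨0, hn⟩ : ℝ) : ℂ) := by
    rw [← hxBpA, add_mulVec, dotProduct_add]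
  set S : ℝ := (star x ⬝ᵥ A *ᵥ x).re with hS
  have hSα : S ≤ α ⟨0, hn⟩ := by
    have h := aux_rayleigh A hA (α ⟨0, hn⟩) hαmax x
    rw [hxunit] at h
    simpa using h
  have hxB : (star x ⬝ᵥ B *ᵥ x).re = ν ⟨0, hn⟩ - S := by
    have h := congrArg Complex.re hsplit
    simp only [Complex.add_re, Complex.ofReal_re] at h
    rw [← hS] at h
    linarith
  have hbound : ∀ k, (star (Y k) ⬝ᵥ (B - A) *ᵥ (Y k)).re ≤ μ ⟨0, hn⟩ := by
    intro k
    have h := aux_rayleigh (B - A) hBmA (μ ⟨0, hn⟩) hμmax (Y k)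
    rw [hYunit k] at h
    simpa using h
  have hAtail : ∑ k ∈ Finset.range (c - 1), star (Y (k + 1)) ⬝ᵥ A *ᵥ (Y (k + 1))
      = -(star x ⬝ᵥ A *ᵥ x) := by
    have hc' : c = (c - 1) + 1 := by omega
    rw [hc', Finset.sum_range_succ', hY0] at hAY
    linear_combination hAY
  have hsum_eq : ∑ k ∈ Finset.range (c - 1), (star (Y (k + 1)) ⬝ᵥ (B - A) *ᵥ (Y (k + 1))).re
      = ((c : ℝ) - 1) * (ν ⟨0, hn⟩ - S) + S := by
    have expand : ∀ k, star (Y (k + 1)) ⬝ᵥ (B - A) *ᵥ (Y (k + 1))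
        = star x ⬝ᵥ B *ᵥ x - star (Y (k + 1)) ⬝ᵥ A *ᵥ (Y (k + 1)) := by
      intro k
      rw [sub_mulVec, dotProduct_sub, hBY]
    simp only [expand, Complex.sub_re, Finset.sum_sub_distrib]
    rw [Finset.sum_const, ← Complex.re_sum, hAtail, Finset.card_range, hxB]
    have hcast : ((c - 1 : ℕ) : ℝ) = (c : ℝ) - 1 := by
      push_cast [Nat.cast_sub (by omega : 1 ≤ c)]; ring
    simp only [nsmul_eq_mul, hcast, Complex.neg_re, ← hS]
    ring
  have hsum_le : ∑ k ∈ Finset.range (c - 1), (star (Y (k + 1)) ⬝ᵥ (B - A) *ᵥ (Y (k + 1))).re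
      ≤ ((c : ℝ) - 1) * μ ⟨0, hn⟩ := by
    calc ∑ k ∈ Finset.range (c - 1), (star (Y (k + 1)) ⬝ᵥ (B - A) *ᵥ (Y (k + 1))).re
        ≤ ∑ _k ∈ Finset.range (c - 1), μ ⟨0, hn⟩ :=
          Finset.sum_le_sum fun k _ => hbound (k + 1)
      _ = ((c : ℝ) - 1) * μ ⟨0, hn⟩ := by
          rw [Finset.sum_const, Finset.card_range, nsmul_eq_mul]
          congr 1
          push_cast [Nat.cast_sub (by omega : 1 ≤ c)]; ring
  have hmain : ((c : ℝ) - 1) * (ν ⟨0, hn⟩ - S) + S ≤ ((c : ℝ) - 1) * μ ⟨0, hn⟩ := by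
    rw [← hsum_eq]; exact hsum_le
  have hc1 : (0 : ℝ) < (c : ℝ) - 1 := by
    have : (2 : ℝ) ≤ (c : ℝ) := by exact_mod_cast hc
    linarith
  have hc2 : (0 : ℝ) ≤ (c : ℝ) - 2 := by
    have : (2 : ℝ) ≤ (c : ℝ) := by exact_mod_cast hc
    linarith
  rw [ge_iff_le, div_mul_eq_mul_div]
  have key : ν ⟨0, hn⟩ - μ ⟨0, hn⟩ ≤ (((c : ℝ) - 2) * α ⟨0, hn⟩) / ((c : ℝ) - 1) := by
    rw [le_div_iff₀ hc1]
    nlinarith [mul_le_mul_of_nonneg_left hSα hc2, hmain]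
  linarith
end

section
/- Let c ≥ 2 be an integer, let A ∈ ℂ^{n×n} be a Hermitian matrix that is colorable with c colors, and let B ∈ ℂ^{n×n} be an arbitrary real diagonal matrix. Then λ_max(A) ≤ (c−1)·(λ_max(A) − λ_max(B + A) + λ_max(B − A)); in particular, if λ_max(A) − λ_max(B + A) + λ_max(B − A) > 0, then c ≥ 1 + λ_max(A)/(λ_max(A) − λ_max(B + A) + λ_max(B − A)). -/
open Matrix Finset

/-- Rayleigh quotient upper bound for Hermitian complex matrices. -/
lemma rayleigh_aux {n : ℕ} {M : Matrix (Fin n) (Fin n) ℂ} (hM : M.IsHermitian)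
    {r : ℝ} (hr : ∀ i, hM.eigenvalues i ≤ r) (v : Fin n → ℂ)
    (hv : dotProduct (star v) v = 1) :
    (dotProduct (star v) (M *ᵥ v)).re ≤ r := by
  set U : Matrix (Fin n) (Fin n) ℂ := (hM.eigenvectorUnitary : Matrix (Fin n) (Fin n) ℂ) with hUdef
  have hU1 : U * star U = 1 := Matrix.mem_unitaryGroup_iff.mp hM.eigenvectorUnitary.2
  set w : Fin n → ℂ := star U *ᵥ v with hwdef
  have hsw : star w = star v ᵥ* U := by
    rw [hwdef, Matrix.star_mulVec, Matrix.star_eq_conjTranspose, Matrix.conjTranspose_conjTranspose]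
  have hw1 : dotProduct (star w) w = 1 := by
    rw [hsw, hwdef, ← dotProduct_mulVec, Matrix.mulVec_mulVec, hU1, Matrix.one_mulVec, hv]
  have hMv : dotProduct (star v) (M *ᵥ v)
      = dotProduct (star w) ((Matrix.diagonal (RCLike.ofReal ∘ hM.eigenvalues)) *ᵥ w) := by
    conv_lhs => rw [hM.spectral_theorem, Unitary.conjStarAlgAut_apply]
    rw [← Matrix.mulVec_mulVec, ← Matrix.mulVec_mulVec, dotProduct_mulVec (star v), ← hsw,
      hwdef]
  rw [hMv]
  have hdiag : dotProduct (star w) ((Matrix.diagonal (RCLike.ofReal ∘ hM.eigenvalues)) *ᵥ w)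
      = ∑ k, ((starRingEnd ℂ) (w k)) * ((hM.eigenvalues k : ℂ) * w k) := by
    simp [dotProduct, Matrix.mulVec_diagonal]
  have hterm : ∀ k, (((starRingEnd ℂ) (w k)) * ((hM.eigenvalues k : ℂ) * w k)).re
      = hM.eigenvalues k * Complex.normSq (w k) := by
    intro k
    have : ((starRingEnd ℂ) (w k)) * ((hM.eigenvalues k : ℂ) * w k)
        = (hM.eigenvalues k : ℂ) * ((w k) * (starRingEnd ℂ) (w k)) := by ring
    rw [this, Complex.mul_conj]
    simp
  have hnorm : ∑ k, Complex.normSq (w k) = 1 := by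
    have : dotProduct (star w) w = ∑ k, (Complex.normSq (w k) : ℂ) := by
      simp only [dotProduct, Pi.star_apply]
      refine Finset.sum_congr rfl fun k _ => ?_
      rw [Complex.star_def, mul_comm, Complex.mul_conj]
    rw [this] at hw1
    have := congrArg Complex.re hw1
    simpa using this
  rw [hdiag, Complex.re_sum]
  calc ∑ k, (((starRingEnd ℂ) (w k)) * ((hM.eigenvalues k : ℂ) * w k)).re
      = ∑ k, hM.eigenvalues k * Complex.normSq (w k) := by
        exact Finset.sum_congr rfl fun k _ => hterm k
    _ ≤ ∑ k, r * Complex.normSq (w k) :=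
        Finset.sum_le_sum fun k _ => mul_le_mul_of_nonneg_right (hr k) (Complex.normSq_nonneg _)
    _ = r * ∑ k, Complex.normSq (w k) := by rw [← Finset.mul_sum]
    _ = r := by rw [hnorm, mul_one]


/-- If the Hermitian matrix `A` is colorable with `c ≥ 2` colors and `B` is a real diagonal
matrix, then `λ_max A ≤ (c-1)·(λ_max A - λ_max (B+A) + λ_max (B-A))`; in particular, if
`λ_max A - λ_max (B+A) + λ_max (B-A) > 0` then
`c ≥ 1 + λ_max A / (λ_max A - λ_max (B+A) + λ_max (B-A))`.
Here `μ`, `ν`, `α` are the non-increasing enumerations of the eigenvalues of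
`B - A`, `B + A` and `A` respectively, so the maximum eigenvalue is the value at index `0`. -/
theorem stmt_2 {n : ℕ} (hn : 0 < n) (c : ℕ) (hc : 2 ≤ c)
    (A B : Matrix (Fin n) (Fin n) ℂ) (hA : A.IsHermitian)
    (f : Fin n → Fin c) (hf : ∀ k l : Fin n, f k = f l → A k l = 0)
    (b : Fin n → ℝ) (hB : B = Matrix.diagonal fun i => (b i : ℂ))
    (hBmA : (B - A).IsHermitian) (hBpA : (B + A).IsHermitian)
    (μ ν α : Fin n → ℝ)
    (hμa : Antitone μ) (hμ : ∃ e : Equiv.Perm (Fin n), μ = hBmA.eigenvalues ∘ e)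
    (hνa : Antitone ν) (hν : ∃ e : Equiv.Perm (Fin n), ν = hBpA.eigenvalues ∘ e)
    (hαa : Antitone α) (hα : ∃ e : Equiv.Perm (Fin n), α = hA.eigenvalues ∘ e) :
    α ⟨0, hn⟩ ≤ ((c : ℝ) - 1) * (α ⟨0, hn⟩ - ν ⟨0, hn⟩ + μ ⟨0, hn⟩) ∧
    (0 < α ⟨0, hn⟩ - ν ⟨0, hn⟩ + μ ⟨0, hn⟩ →
      (c : ℝ) ≥ 1 + α ⟨0, hn⟩ / (α ⟨0, hn⟩ - ν ⟨0, hn⟩ + μ ⟨0, hn⟩)) := by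
  obtain ⟨eμ, hμe⟩ := hμ
  obtain ⟨eν, hνe⟩ := hν
  obtain ⟨eα, hαe⟩ := hα
  set i0 : Fin n := ⟨0, hn⟩ with hi0
  set α0 := α i0
  set ν0 := ν i0
  set μ0 := μ i0
  have hc0 : c ≠ 0 := by omega
  -- value at index 0 dominates all eigenvalues
  have hmax : ∀ (ρ : Fin n → ℝ), Antitone ρ → ∀ (e : Equiv.Perm (Fin n))
      (g : Fin n → ℝ), ρ = g ∘ e → ∀ i, g i ≤ ρ i0 := by
    intro ρ hρ e g hg i
    have h1 : g i = ρ (e.symm i) := by rw [hg]; simp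
    rw [h1]
    exact hρ (by exact Fin.mk_le_of_le_val (Nat.zero_le _))
  have hαmax : ∀ i, hA.eigenvalues i ≤ α0 := hmax α hαa eα _ hαe
  have hμmax : ∀ i, hBmA.eigenvalues i ≤ μ0 := hmax μ hμa eμ _ hμe
  -- the top eigenvector of B + A
  set x : Fin n → ℂ := ⇑(hBpA.eigenvectorBasis (eν i0)) with hxdef
  have hx1 : dotProduct (star x) x = 1 := by
    have h1 := hBpA.eigenvectorBasis.orthonormal.1 (eν i0)
    have h2 : (inner ℂ (hBpA.eigenvectorBasis (eν i0)) (hBpA.eigenvectorBasis (eν i0)) : ℂ)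
        = dotProduct (star x) x := by
          rw [EuclideanSpace.inner_eq_star_dotProduct, dotProduct_comm]
    rw [← h2, inner_self_eq_norm_sq_to_K, h1]
    norm_num
  have hxν : ν0 = (dotProduct (star x) ((B + A) *ᵥ x)).re := by
    have h1 := hBpA.eigenvalues_eq (eν i0)
    have hν0 : ν0 = hBpA.eigenvalues (eν i0) := by
      show ν i0 = _
      rw [hνe]; rfl
    rw [hν0, h1]; rfl
  -- root of unity setup
  set ω : ℂ := Complex.exp (2 * Real.pi * Complex.I / c) with hωdef
  have hω : IsPrimitiveRoot ω c := Complex.isPrimitiveRoot_exp c hc0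
  have habs : ∀ m : ℕ, (starRingEnd ℂ) (ω ^ m) * ω ^ m = 1 := by
    intro m
    have h1 : ‖ω‖ = 1 := by
      rw [hωdef]
      rw [show (2 * Real.pi * Complex.I / c) = ((2 * Real.pi / c : ℝ) : ℂ) * Complex.I by
        push_cast; ring]
      exact Complex.norm_exp_ofReal_mul_I _
    rw [mul_comm, Complex.mul_conj, Complex.normSq_eq_norm_sq]
    rw [norm_pow, h1, one_pow]
    norm_num
  -- twisted vectors
  set z : ℕ → Fin n → ℂ := fun t k => ω ^ (t * (f k : ℕ)) * x k with hzdef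
  have hz0 : z 0 = x := by funext k; simp [hzdef]
  have hz1 : ∀ t, dotProduct (star (z t)) (z t) = 1 := by
    intro t
    have : ∀ k, star (z t k) * z t k = star (x k) * x k := by
      intro k
      simp only [hzdef, Complex.star_def, _root_.map_mul]
      linear_combination ((starRingEnd ℂ) (x k) * x k) * habs (t * (f k : ℕ))
    calc dotProduct (star (z t)) (z t) = ∑ k, star (z t k) * z t k := rfl
      _ = ∑ k, star (x k) * x k := Finset.sum_congr rfl fun k _ => this k
      _ = 1 := hx1
  -- expansion of quadratic forms
  have expand : ∀ (M : Matrix (Fin n) (Fin n) ℂ) (v : Fin n → ℂ),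
      dotProduct (star v) (M *ᵥ v)
        = ∑ k, ∑ l, (starRingEnd ℂ) (v k) * M k l * v l := by
    intro M v
    simp only [dotProduct, Matrix.mulVec, dotProduct, Pi.star_apply,
      Finset.mul_sum, Complex.star_def]
    exact Finset.sum_congr rfl fun k _ => Finset.sum_congr rfl fun l _ => by ring
  -- B-part is twist-invariant
  have hzB : ∀ t, dotProduct (star (z t)) (B *ᵥ (z t))
      = dotProduct (star x) (B *ᵥ x) := by
    intro t
    rw [expand, expand]
    refine Finset.sum_congr rfl fun k _ => Finset.sum_congr rfl fun l _ => ?_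
    rcases eq_or_ne k l with rfl | hkl
    · simp only [hzdef, hB, Matrix.diagonal_apply_eq, _root_.map_mul]
      linear_combination ((starRingEnd ℂ) (x k) * (b k : ℂ) * x k) * habs (t * (f k : ℕ))
    · simp [hB, Matrix.diagonal_apply_ne _ hkl]
  -- the pinching sum vanishes
  have hzA : ∑ t ∈ Finset.range c, dotProduct (star (z t)) (A *ᵥ (z t)) = 0 := by
    have key : ∀ k l : Fin n,
        (∑ t ∈ Finset.range c,
          (starRingEnd ℂ) (ω ^ (t * (f k : ℕ))) * ω ^ (t * (f l : ℕ))) * A k l = 0 := by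
      intro k l
      rcases eq_or_ne (f k) (f l) with h | h
      · rw [hf k l h, mul_zero]
      · set ζ : ℂ := (starRingEnd ℂ) (ω ^ (f k : ℕ)) * ω ^ (f l : ℕ) with hζdef
        have hconv : ∀ t, (starRingEnd ℂ) (ω ^ (t * (f k : ℕ))) * ω ^ (t * (f l : ℕ)) = ζ ^ t := by
          intro t
          rw [hζdef, mul_pow, ← map_pow, ← pow_mul, ← pow_mul, mul_comm (f k : ℕ) t,
            mul_comm (f l : ℕ) t]
        have hζc : ζ ^ c = 1 := by
          rw [hζdef, mul_pow, ← map_pow, ← pow_mul, ← pow_mul, mul_comm (f k : ℕ) c,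
            mul_comm (f l : ℕ) c, pow_mul, pow_mul, hω.pow_eq_one, one_pow, one_pow,
            _root_.map_one, one_mul]
        have hζ1 : ζ ≠ 1 := by
          intro hζ
          have h2 : ω ^ (f l : ℕ) = ω ^ (f k : ℕ) := by
            have := congrArg (fun y => ω ^ (f k : ℕ) * y) hζ
            simp only [hζdef] at this
            calc ω ^ (f l : ℕ)
                = ((starRingEnd ℂ) (ω ^ (f k : ℕ)) * ω ^ (f k : ℕ)) * ω ^ (f l : ℕ) := by
                  rw [habs]; ring
              _ = ω ^ (f k : ℕ) * ((starRingEnd ℂ) (ω ^ (f k : ℕ)) * ω ^ (f l : ℕ)) := by ring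
              _ = ω ^ (f k : ℕ) * 1 := by rw [← hζdef, hζ]
              _ = ω ^ (f k : ℕ) := mul_one _
          exact h (Fin.ext (hω.pow_inj (f l).2 (f k).2 h2)).symm
        have : ∑ t ∈ Finset.range c,
            (starRingEnd ℂ) (ω ^ (t * (f k : ℕ))) * ω ^ (t * (f l : ℕ)) = 0 := by
          rw [Finset.sum_congr rfl fun t _ => hconv t, geom_sum_eq hζ1, hζc, sub_self, zero_div]
        rw [this, zero_mul]
    calc ∑ t ∈ Finset.range c, dotProduct (star (z t)) (A *ᵥ (z t))
        = ∑ t ∈ Finset.range c, ∑ k, ∑ l, (starRingEnd ℂ) (z t k) * A k l * z t l :=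
          Finset.sum_congr rfl fun t _ => expand A (z t)
      _ = ∑ k, ∑ l, ∑ t ∈ Finset.range c,
            ((starRingEnd ℂ) (ω ^ (t * (f k : ℕ))) * ω ^ (t * (f l : ℕ)))
              * ((starRingEnd ℂ) (x k) * A k l * x l) := by
          rw [Finset.sum_comm]
          refine Finset.sum_congr rfl fun k _ => ?_
          rw [Finset.sum_comm]
          refine Finset.sum_congr rfl fun l _ => Finset.sum_congr rfl fun t _ => ?_
          simp only [hzdef, _root_.map_mul]
          ring
      _ = ∑ k, ∑ l, ((∑ t ∈ Finset.range c,
            (starRingEnd ℂ) (ω ^ (t * (f k : ℕ))) * ω ^ (t * (f l : ℕ))) * A k l)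
              * ((starRingEnd ℂ) (x k) * x l) := by
          refine Finset.sum_congr rfl fun k _ => Finset.sum_congr rfl fun l _ => ?_
          rw [Finset.sum_mul, Finset.sum_mul]
          refine Finset.sum_congr rfl fun t _ => ?_
          ring
      _ = 0 := by
          refine Finset.sum_eq_zero fun k _ => Finset.sum_eq_zero fun l _ => ?_
          rw [key, zero_mul]
  -- Rayleigh bounds
  have hrayA : ∀ v : Fin n → ℂ, dotProduct (star v) v = 1 →
      (dotProduct (star v) (A *ᵥ v)).re ≤ α0 := fun v hv => rayleigh_aux hA hαmax v hv
  have hrayM : ∀ v : Fin n → ℂ, dotProduct (star v) v = 1 →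
      (dotProduct (star v) ((B - A) *ᵥ v)).re ≤ μ0 :=
    fun v hv => rayleigh_aux hBmA hμmax v hv
  -- real quantities
  set β : ℝ := (dotProduct (star x) (B *ᵥ x)).re with hβdef
  set aa : ℕ → ℝ := fun t => (dotProduct (star (z t)) (A *ᵥ (z t))).re with haadef
  have hsum0 : ∑ t ∈ Finset.range c, aa t = 0 := by
    rw [haadef, ← Complex.re_sum, hzA, Complex.zero_re]
  have hlb : ∀ t, β - μ0 ≤ aa t := by
    intro t
    have h1 : (dotProduct (star (z t)) ((B - A) *ᵥ (z t))).re ≤ μ0 := hrayM _ (hz1 t)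
    have h2 : (dotProduct (star (z t)) ((B - A) *ᵥ (z t))).re = β - aa t := by
      rw [Matrix.sub_mulVec, dotProduct_sub, Complex.sub_re, hzB t]
    linarith [h1, h2.symm.le]
  have haa0 : aa 0 ≤ α0 := by rw [haadef]; simp only [hz0]; exact hrayA x hx1
  have hνsplit : ν0 = β + aa 0 := by
    rw [hxν, Matrix.add_mulVec, dotProduct_add, Complex.add_re, haadef, hβdef]
    simp [hz0]
  -- split off t = 0 and bound the rest
  have hsplit : ∑ t ∈ Finset.range c, aa t
      = aa 0 + ∑ t ∈ Finset.Ico 1 c, aa t := by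
    rw [Finset.range_eq_Ico, Finset.sum_eq_sum_Ico_succ_bot (by omega : 0 < c)]
  have hcard : (Finset.Ico 1 c).card = c - 1 := by simp
  have hIco : ((c : ℝ) - 1) * (β - μ0) ≤ ∑ t ∈ Finset.Ico 1 c, aa t := by
    have h1 := Finset.card_nsmul_le_sum (Finset.Ico 1 c) aa (β - μ0) fun t _ => hlb t
    rw [hcard, nsmul_eq_mul] at h1
    have h2 : ((c - 1 : ℕ) : ℝ) = (c : ℝ) - 1 := by
      rw [Nat.cast_sub (by omega : 1 ≤ c)]; norm_num
    rw [h2] at h1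
    exact h1
  have hkey : aa 0 ≤ ((c : ℝ) - 1) * (μ0 - β) := by
    have h1 : aa 0 = - ∑ t ∈ Finset.Ico 1 c, aa t := by
      rw [hsplit] at hsum0; linarith
    rw [h1]
    nlinarith [hIco]
  -- conclude
  have hcR : (2 : ℝ) ≤ (c : ℝ) := by exact_mod_cast hc
  have main : α0 ≤ ((c : ℝ) - 1) * (α0 - ν0 + μ0) := by nlinarith [hkey, hνsplit, haa0, hcR]
  refine ⟨main, fun hpos => ?_⟩
  rw [ge_iff_le, ← sub_nonneg]
  have h1 : α0 / (α0 - ν0 + μ0) ≤ (c : ℝ) - 1 := by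
    rw [div_le_iff₀ hpos]
    exact main
  linarith
end

section
/- (Hoffman's bound.) Let G be a finite simple graph on n vertices with at least one edge and chromatic number χ. Then μ_n < 0 and μ_1 ≤ (χ − 1)·(−μ_n); equivalently, χ ≥ 1 + μ_1/(−μ_n). -/
open Matrix Finset

local notation "⟪" x ", " y "⟫" => inner (𝕜 := ℝ) x y

lemma rayleigh_lower {n : ℕ} {A : Matrix (Fin n) (Fin n) ℝ} (hA : A.IsHermitian)
    {lo : ℝ} (hlo : ∀ i, lo ≤ hA.eigenvalues i) (z : Fin n → ℝ) :
    lo * (z ⬝ᵥ z) ≤ z ⬝ᵥ (A *ᵥ z) := by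
  classical
  set b := hA.eigenvectorBasis with hb
  set Z : EuclideanSpace ℝ (Fin n) := (WithLp.equiv 2 _).symm z with hZ
  have hsym : ∀ u v : Fin n → ℝ, u ⬝ᵥ (A *ᵥ v) = (A *ᵥ u) ⬝ᵥ v := by
    intro u v
    have hAt : Aᵀ = A := by
      ext i j
      have := congrFun (congrFun hA.eq j) i
      simpa using this.symm
    rw [Matrix.dotProduct_mulVec, ← Matrix.mulVec_transpose, hAt]
  have hinner : ∀ u v : Fin n → ℝ,
      ⟪(WithLp.equiv 2 _).symm u, (WithLp.equiv 2 _).symm v⟫ = u ⬝ᵥ v := by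
    intro u v
    rw [WithLp.equiv_symm_apply, EuclideanSpace.inner_toLp_toLp, dotProduct_comm]
    simp
  have hbz : ∀ i, ⟪b i, Z⟫ = (WithLp.equiv 2 _ (b i)) ⬝ᵥ z := by
    intro i
    rw [hZ, ← hinner]
    rfl
  have hzb : ∀ i, ⟪Z, b i⟫ = z ⬝ᵥ (WithLp.equiv 2 _ (b i)) := by
    intro i
    rw [hZ, ← hinner]
    rfl
  have h2 : ∀ i, ⟪b i, (WithLp.equiv 2 _).symm (A *ᵥ z)⟫
      = hA.eigenvalues i * ((WithLp.equiv 2 _ (b i)) ⬝ᵥ z) := by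
    intro i
    have h3 : ⟪b i, (WithLp.equiv 2 _).symm (A *ᵥ z)⟫
        = (WithLp.equiv 2 _ (b i)) ⬝ᵥ (A *ᵥ z) := hinner _ _
    rw [h3, hsym]
    have h4 : A *ᵥ (WithLp.equiv 2 _ (b i)) = hA.eigenvalues i • (WithLp.equiv 2 _ (b i)) :=
      hA.mulVec_eigenvectorBasis i
    rw [h4, smul_dotProduct]
    simp
  have key : z ⬝ᵥ (A *ᵥ z) = ∑ i, hA.eigenvalues i * ((WithLp.equiv 2 _ (b i)) ⬝ᵥ z)^2 := by
    have h1 : z ⬝ᵥ (A *ᵥ z) = ⟪Z, (WithLp.equiv 2 _).symm (A *ᵥ z)⟫ := (hinner _ _).symm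
    rw [h1, ← b.sum_inner_mul_inner]
    refine Finset.sum_congr rfl fun i _ => ?_
    rw [h2 i, hzb i, dotProduct_comm]
    ring
  have keyn : z ⬝ᵥ z = ∑ i, ((WithLp.equiv 2 _ (b i)) ⬝ᵥ z)^2 := by
    have h1 : z ⬝ᵥ z = ⟪Z, Z⟫ := (hinner _ _).symm
    rw [h1, ← b.sum_inner_mul_inner]
    refine Finset.sum_congr rfl fun i _ => ?_
    rw [hbz i, hzb i, dotProduct_comm]
    ring
  rw [key, keyn, Finset.mul_sum]
  refine Finset.sum_le_sum fun i _ => ?_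
  exact mul_le_mul_of_nonneg_right (hlo i) (sq_nonneg _)


/-- **Hoffman's bound.** For a finite simple graph `G` on `n` vertices with at least one edge
and chromatic number `χ`, the smallest adjacency eigenvalue `μ_n` is negative and
`μ_1 ≤ (χ - 1)·(-μ_n)`; equivalently `χ ≥ 1 + μ_1/(-μ_n)`.
Here `μ` is the non-increasing enumeration of the eigenvalues of the adjacency matrix. -/
theorem stmt_3 {n : ℕ} (hn : 0 < n) (G : SimpleGraph (Fin n)) [DecidableRel G.Adj]
    (he : ∃ v w : Fin n, G.Adj v w)
    (χ : ℕ) (hχ : G.chromaticNumber = (χ : ℕ∞))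
    (hA : (G.adjMatrix ℝ).IsHermitian)
    (μ : Fin n → ℝ) (hμa : Antitone μ)
    (hμ : ∃ e : Equiv.Perm (Fin n), μ = hA.eigenvalues ∘ e) :
    μ ⟨n - 1, by omega⟩ < 0 ∧
    μ ⟨0, hn⟩ ≤ ((χ : ℝ) - 1) * (-μ ⟨n - 1, by omega⟩) ∧
    (χ : ℝ) ≥ 1 + μ ⟨0, hn⟩ / (-μ ⟨n - 1, by omega⟩) := by
    classical
  obtain ⟨e, rfl⟩ := hμ
  obtain ⟨v, w, hvw⟩ := he
  set A := G.adjMatrix ℝ with hAdef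
  set lo : ℝ := (hA.eigenvalues ∘ e) ⟨n - 1, by omega⟩ with hlodef
  set μ1 : ℝ := (hA.eigenvalues ∘ e) ⟨0, hn⟩ with hμ1def
  have hloall : ∀ i, lo ≤ hA.eigenvalues i := by
    intro i
    have hle : e.symm i ≤ (⟨n - 1, by omega⟩ : Fin n) := by
      rw [Fin.le_def]
      have := (e.symm i).isLt
      simp only []
      omega
    have := hμa hle
    simp only [Function.comp_apply, Equiv.apply_symm_apply] at this
    exact this
  have hray := fun z => rayleigh_lower hA hloall z
  have hsym : ∀ u v : Fin n → ℝ, u ⬝ᵥ (A *ᵥ v) = (A *ᵥ u) ⬝ᵥ v := by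
    intro u v
    rw [Matrix.dotProduct_mulVec, ← Matrix.mulVec_transpose, G.transpose_adjMatrix]
  -- part 1
  have part1 : lo < 0 := by
    have h := hray (Pi.single v 1 - Pi.single w 1)
    have hvw' : v ≠ w := G.ne_of_adj hvw
    rw [hAdef, Matrix.mulVec_sub, Matrix.mulVec_single_one, Matrix.mulVec_single_one] at h
    simp only [sub_dotProduct, dotProduct_sub, single_dotProduct,
      Pi.single_apply, Pi.sub_apply, mul_one, Matrix.col_apply, SimpleGraph.adjMatrix_apply,
      hvw', hvw'.symm, if_false, hvw, hvw.symm, SimpleGraph.irrefl, if_true, if_pos rfl] at h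
    nlinarith [h]
  -- coloring
  have hcol : G.Colorable χ := SimpleGraph.chromaticNumber_le_iff_colorable.mp (le_of_eq hχ)
  obtain ⟨C⟩ := hcol
  have hχ2 : 2 ≤ χ := by
    have hne : C v ≠ C w := C.valid hvw
    have hne' : (C v : ℕ) ≠ (C w : ℕ) := fun h => hne (Fin.ext h)
    have h1 := (C v).isLt
    have h2 := (C w).isLt
    omega
  -- eigenvector
  set x : Fin n → ℝ := WithLp.equiv 2 _ (hA.eigenvectorBasis (e ⟨0, hn⟩)) with hxdef
  have hAx : A *ᵥ x = μ1 • x := hA.mulVec_eigenvectorBasis (e ⟨0, hn⟩)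
  have hxx : x ⬝ᵥ x = 1 := by
    have h1 : ‖hA.eigenvectorBasis (e ⟨0, hn⟩)‖ = 1 :=
      hA.eigenvectorBasis.orthonormal.1 _
    have h2 : (inner (𝕜 := ℝ) (hA.eigenvectorBasis (e ⟨0, hn⟩))
        (hA.eigenvectorBasis (e ⟨0, hn⟩))) = 1 := by
      rw [real_inner_self_eq_norm_mul_norm, h1]; norm_num
    have h3 : (inner (𝕜 := ℝ) (hA.eigenvectorBasis (e ⟨0, hn⟩))
        (hA.eigenvectorBasis (e ⟨0, hn⟩))) = x ⬝ᵥ x := by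
      rw [hxdef]
      rw [show hA.eigenvectorBasis (e ⟨0, hn⟩)
        = (WithLp.equiv 2 _).symm (WithLp.equiv 2 _ (hA.eigenvectorBasis (e ⟨0, hn⟩))) from rfl,
        WithLp.equiv_symm_apply, EuclideanSpace.inner_toLp_toLp, dotProduct_comm]
      simp
    rw [← h3, h2]
  set y : Fin χ → Fin n → ℝ := fun i a => if C a = i then x a else 0 with hydef
  have F2 : ∀ i, y i ⬝ᵥ (A *ᵥ y i) = 0 := by
    intro i
    simp only [dotProduct, Matrix.mulVec]
    refine Finset.sum_eq_zero fun a _ => ?_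
    rw [Finset.mul_sum]
    refine Finset.sum_eq_zero fun b _ => ?_
    by_cases h1 : C a = i
    · by_cases h2 : C b = i
      · have hnadj : ¬ G.Adj a b := fun h => C.valid h (h1.trans h2.symm)
        simp [hAdef, SimpleGraph.adjMatrix_apply, hnadj]
      · simp [hydef, h2]
    · simp [hydef, h1]
  have F3 : ∀ i, y i ⬝ᵥ x = y i ⬝ᵥ y i := by
    intro i
    refine Finset.sum_congr rfl fun a _ => ?_
    by_cases h : C a = i <;> simp [hydef, h]
  have F4 : ∑ i, y i ⬝ᵥ y i = 1 := by
    have : ∑ i, y i ⬝ᵥ y i = ∑ a, ∑ i : Fin χ, y i a * y i a := by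
      rw [Finset.sum_comm]; rfl
    rw [this, ← hxx]
    refine Finset.sum_congr rfl fun a _ => ?_
    rw [show ∑ i : Fin χ, y i a * y i a
      = ∑ i : Fin χ, if C a = i then x a * x a else 0 by
        refine Finset.sum_congr rfl fun i _ => ?_
        by_cases h : C a = i <;> simp [hydef, h]]
    rw [Finset.sum_ite_eq]
    simp
  set k : ℝ := (χ : ℝ) with hkdef
  have hk2 : (2 : ℝ) ≤ k := by rw [hkdef]; exact_mod_cast hχ2
  set z : Fin χ → Fin n → ℝ := fun i => k • y i - x with hzdef
  have hzz : ∀ i, z i ⬝ᵥ z i = k ^ 2 * (y i ⬝ᵥ y i) - 2 * k * (y i ⬝ᵥ y i) + 1 := by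
    intro i
    simp only [hzdef, sub_dotProduct, dotProduct_sub,
      smul_dotProduct, dotProduct_smul, smul_eq_mul]
    rw [dotProduct_comm x (y i), F3 i, hxx]
    ring
  have hzAz : ∀ i, z i ⬝ᵥ (A *ᵥ z i) = -2 * k * μ1 * (y i ⬝ᵥ y i) + μ1 := by
    intro i
    have e1 : A *ᵥ z i = k • (A *ᵥ y i) - μ1 • x := by
      rw [hzdef]
      simp only []
      rw [Matrix.mulVec_sub, Matrix.mulVec_smul, hAx]
    rw [e1]
    simp only [hzdef, sub_dotProduct, dotProduct_sub,
      smul_dotProduct, dotProduct_smul, smul_eq_mul]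
    have e2 : x ⬝ᵥ (A *ᵥ y i) = μ1 * (y i ⬝ᵥ y i) := by
      rw [hsym, hAx, smul_dotProduct, dotProduct_comm, F3 i]
      simp
    rw [F2 i, e2, dotProduct_comm (y i) x] at *
    rw [dotProduct_comm x (y i), F3 i, hxx]
    ring
  have hsum : lo * (k ^ 2 - k) ≤ -k * μ1 := by
    have hL : ∑ i, lo * (z i ⬝ᵥ z i) = lo * (k ^ 2 - k) := by
      have : ∑ i, lo * (z i ⬝ᵥ z i)
          = ∑ i, (lo * (k ^ 2 - 2 * k) * (y i ⬝ᵥ y i) + lo) := by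
        refine Finset.sum_congr rfl fun i _ => ?_
        rw [hzz i]; ring
      rw [this, Finset.sum_add_distrib, ← Finset.mul_sum, F4, Finset.sum_const,
        Finset.card_univ, Fintype.card_fin, nsmul_eq_mul, hkdef]
      ring
    have hR : ∑ i, z i ⬝ᵥ (A *ᵥ z i) = -k * μ1 := by
      have : ∑ i, z i ⬝ᵥ (A *ᵥ z i)
          = ∑ i, (-2 * k * μ1 * (y i ⬝ᵥ y i) + μ1) := by
        refine Finset.sum_congr rfl fun i _ => hzAz i
      rw [this, Finset.sum_add_distrib, ← Finset.mul_sum, F4, Finset.sum_const,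
        Finset.card_univ, Fintype.card_fin, nsmul_eq_mul, hkdef]
      ring
    calc lo * (k ^ 2 - k) = ∑ i, lo * (z i ⬝ᵥ z i) := hL.symm
      _ ≤ ∑ i, z i ⬝ᵥ (A *ᵥ z i) := Finset.sum_le_sum fun i _ => hray (z i)
      _ = -k * μ1 := hR
  have part2 : μ1 ≤ (k - 1) * (-lo) := by nlinarith [hsum, hk2]
  refine ⟨part1, part2, ?_⟩
  have hpos : (0 : ℝ) < -lo := by linarith
  have := (div_le_iff₀ hpos).mpr part2
  linarith
end

section
/- (Nikiforov's hybrid bound.) Let G be a finite simple graph on n vertices with at least one edge and chromatic number χ. Then μ_1 ≤ (χ − 1)·(θ_1 − μ_1); equivalently, χ ≥ 1 + μ_1/(θ_1 − μ_1). -/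
open Matrix Finset

lemma rayleigh_upper {n : ℕ} {M : Matrix (Fin n) (Fin n) ℝ} (hM : M.IsHermitian) {t : ℝ}
    (ht : ∀ i, hM.eigenvalues i ≤ t) (y : Fin n → ℝ) :
    y ⬝ᵥ (M *ᵥ y) ≤ t * (y ⬝ᵥ y) := by
  set U : Matrix (Fin n) (Fin n) ℝ := (hM.eigenvectorUnitary : Matrix (Fin n) (Fin n) ℝ) with hUdef
  have hU : star U = Uᵀ := by
    ext i j; simp [Matrix.star_apply]
  set z : Fin n → ℝ := Uᵀ *ᵥ y with hz
  have key : ∀ w : Fin n → ℝ, y ⬝ᵥ (U *ᵥ w) = z ⬝ᵥ w := by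
    intro w
    rw [Matrix.dotProduct_mulVec, hz, Matrix.mulVec_transpose]
  have hspec : M = U * diagonal hM.eigenvalues * Uᵀ := by
    rw [hUdef, ← hU]
    simpa [Function.comp, RCLike.ofReal_real_eq_id] using hM.spectral_theorem
  have h1 : y ⬝ᵥ (M *ᵥ y) = ∑ i, hM.eigenvalues i * (z i * z i) := by
    conv_lhs => rw [hspec]
    rw [← Matrix.mulVec_mulVec, ← Matrix.mulVec_mulVec, key]
    rw [dotProduct]
    exact Finset.sum_congr rfl fun i _ => by rw [Matrix.mulVec_diagonal]; ring
  have hUU : U * Uᵀ = 1 := by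
    rw [← hU]; exact Matrix.mem_unitaryGroup_iff.mp hM.eigenvectorUnitary.2
  have h2 : y ⬝ᵥ y = z ⬝ᵥ z := by
    have : y ⬝ᵥ y = y ⬝ᵥ ((U * Uᵀ) *ᵥ y) := by rw [hUU, Matrix.one_mulVec]
    rw [this, ← Matrix.mulVec_mulVec, key]
  rw [h1, h2, dotProduct, Finset.mul_sum]
  exact Finset.sum_le_sum fun i _ =>
    mul_le_mul_of_nonneg_right (ht i) (mul_self_nonneg _)

lemma sum_dot {n k : ℕ} (f : Fin k → Fin n → ℝ) (w : Fin n → ℝ) :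
    (∑ s, f s) ⬝ᵥ w = ∑ s, f s ⬝ᵥ w := by
  simp only [dotProduct, Finset.sum_apply, Finset.sum_mul]
  exact Finset.sum_comm

lemma dot_sum {n k : ℕ} (w : Fin n → ℝ) (f : Fin k → Fin n → ℝ) :
    w ⬝ᵥ (∑ s, f s) = ∑ s, w ⬝ᵥ f s := by
  simp only [dotProduct, Finset.sum_apply, Finset.mul_sum]
  exact Finset.sum_comm

lemma mulVec_sum' {n k : ℕ} (M : Matrix (Fin n) (Fin n) ℝ) (f : Fin k → Fin n → ℝ) :
    M *ᵥ (∑ s, f s) = ∑ s, M *ᵥ f s := by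
  funext i
  rw [Finset.sum_apply]
  simp only [Matrix.mulVec]
  exact dot_sum _ _

lemma pair_identity {n k : ℕ} (M : Matrix (Fin n) (Fin n) ℝ) (xs : Fin k → Fin n → ℝ) :
    ∑ s : Fin k, ∑ t : Fin k, (xs s - xs t) ⬝ᵥ (M *ᵥ (xs s - xs t))
      = 2 * (k : ℝ) * (∑ s, xs s ⬝ᵥ (M *ᵥ xs s))
        - 2 * ((∑ s, xs s) ⬝ᵥ (M *ᵥ (∑ s, xs s))) := by
  have hg : (∑ s, xs s) ⬝ᵥ (M *ᵥ (∑ s, xs s)) = ∑ s, ∑ t, xs s ⬝ᵥ (M *ᵥ xs t) := by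
    rw [mulVec_sum', sum_dot]
    exact Finset.sum_congr rfl fun s _ => dot_sum _ _
  have expand : ∀ s t, (xs s - xs t) ⬝ᵥ (M *ᵥ (xs s - xs t))
      = xs s ⬝ᵥ (M *ᵥ xs s) + xs t ⬝ᵥ (M *ᵥ xs t)
        - xs s ⬝ᵥ (M *ᵥ xs t) - xs t ⬝ᵥ (M *ᵥ xs s) := by
    intro s t
    simp only [Matrix.mulVec_sub, dotProduct_sub, sub_dotProduct]
    ring
  calc ∑ s : Fin k, ∑ t : Fin k, (xs s - xs t) ⬝ᵥ (M *ᵥ (xs s - xs t))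
      = ∑ s : Fin k, ∑ t : Fin k, (xs s ⬝ᵥ (M *ᵥ xs s) + xs t ⬝ᵥ (M *ᵥ xs t)
          - xs s ⬝ᵥ (M *ᵥ xs t) - xs t ⬝ᵥ (M *ᵥ xs s)) :=
        Finset.sum_congr rfl fun s _ => Finset.sum_congr rfl fun t _ => expand s t
    _ = 2 * (k : ℝ) * (∑ s, xs s ⬝ᵥ (M *ᵥ xs s))
        - 2 * ((∑ s, xs s) ⬝ᵥ (M *ᵥ (∑ s, xs s))) := by
        rw [hg]
        have hswap : ∑ s : Fin k, ∑ t : Fin k, xs t ⬝ᵥ (M *ᵥ xs s)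
            = ∑ s : Fin k, ∑ t : Fin k, xs s ⬝ᵥ (M *ᵥ xs t) := Finset.sum_comm
        simp only [Finset.sum_sub_distrib, Finset.sum_add_distrib, Finset.sum_const,
          Finset.card_univ, Fintype.card_fin, nsmul_eq_mul, hswap, ← Finset.mul_sum]
        ring

/-- **Nikiforov's hybrid bound.** For a finite simple graph `G` on `n` vertices with at least
one edge and chromatic number `χ`, `μ_1 ≤ (χ - 1)·(θ_1 - μ_1)`; equivalently
`χ ≥ 1 + μ_1/(θ_1 - μ_1)`.  Here `μ` and `θ` are the non-increasing enumerations of the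
eigenvalues of the adjacency matrix and of the Laplacian matrix, respectively. -/
theorem stmt_4 {n : ℕ} (hn : 0 < n) (G : SimpleGraph (Fin n)) [DecidableRel G.Adj]
    (he : ∃ v w : Fin n, G.Adj v w)
    (χ : ℕ) (hχ : G.chromaticNumber = (χ : ℕ∞))
    (hA : (G.adjMatrix ℝ).IsHermitian)
    (hL : (G.lapMatrix ℝ).IsHermitian)
    (μ θ : Fin n → ℝ)
    (hμa : Antitone μ) (hμ : ∃ e : Equiv.Perm (Fin n), μ = hA.eigenvalues ∘ e)
    (hθa : Antitone θ) (hθ : ∃ e : Equiv.Perm (Fin n), θ = hL.eigenvalues ∘ e) :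
    μ ⟨0, hn⟩ ≤ ((χ : ℝ) - 1) * (θ ⟨0, hn⟩ - μ ⟨0, hn⟩) ∧
    (χ : ℝ) ≥ 1 + μ ⟨0, hn⟩ / (θ ⟨0, hn⟩ - μ ⟨0, hn⟩) := by
  classical
  obtain ⟨v, w, hvw⟩ := he
  -- the coloring
  have hcol : G.Colorable χ := by
    have h := G.colorable_of_chromaticNumber_ne_top (by rw [hχ]; exact ENat.coe_ne_top χ)
    rwa [hχ, ENat.toNat_coe] at h
  obtain ⟨C⟩ := hcol
  have hχpos : 0 < χ := (C v).pos
  have hχ1 : (1 : ℝ) ≤ (χ : ℝ) := by exact_mod_cast hχpos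
  set μ0 : ℝ := μ ⟨0, hn⟩ with hμ0def
  set θ0 : ℝ := θ ⟨0, hn⟩ with hθ0def
  -- μ0 and θ0 dominate all eigenvalues
  obtain ⟨e, heμ⟩ := hμ
  have hμtop : ∀ i, hA.eigenvalues i ≤ μ0 := by
    intro i
    have h1 : hA.eigenvalues i = μ (e.symm i) := by rw [heμ]; simp
    rw [h1, hμ0def]
    exact hμa (by simp [Fin.le_def])
  have hθtop : ∀ i, hL.eigenvalues i ≤ θ0 := by
    obtain ⟨e', heθ⟩ := hθ
    intro i
    have h1 : hL.eigenvalues i = θ (e'.symm i) := by rw [heθ]; simp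
    rw [h1, hθ0def]
    exact hθa (by simp [Fin.le_def])
  -- the top eigenvector of A
  set x : Fin n → ℝ := ⇑(hA.eigenvectorBasis (e ⟨0, hn⟩)) with hxdef
  have hx1 : x ⬝ᵥ x = 1 := by
    have hn1 : ‖hA.eigenvectorBasis (e ⟨0, hn⟩)‖ = 1 :=
      hA.eigenvectorBasis.orthonormal.1 _
    have : x ⬝ᵥ x = (inner ℝ (hA.eigenvectorBasis (e ⟨0, hn⟩))
        (hA.eigenvectorBasis (e ⟨0, hn⟩)) : ℝ) := by
      rw [PiLp.inner_apply]
      simp [dotProduct, hxdef, sq]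
    rw [this, real_inner_self_eq_norm_mul_norm, hn1, mul_one]
  have hμ0eig : hA.eigenvalues (e ⟨0, hn⟩) = μ0 := by
    rw [hμ0def, heμ]; rfl
  have hxA : x ⬝ᵥ (G.adjMatrix ℝ *ᵥ x) = μ0 := by
    rw [hxdef, hA.mulVec_eigenvectorBasis]
    rw [dotProduct_smul, ← hxdef, hx1]
    simp [hμ0eig]
  -- color classes
  set xs : Fin χ → Fin n → ℝ := fun s v' => if C v' = s then x v' else 0 with hxsdef
  have hxs_sum : ∑ s, xs s = x := by
    funext v'
    rw [Finset.sum_apply]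
    simp [hxsdef]
  have hw : ∀ wt : Fin n → ℝ,
      ∑ s, ∑ v', wt v' * xs s v' * xs s v' = ∑ v', wt v' * x v' * x v' := by
    intro wt
    rw [Finset.sum_comm]
    refine Finset.sum_congr rfl fun v' _ => ?_
    simp [hxsdef, mul_ite, ite_mul, Finset.sum_ite_eq]
  -- A vanishes on color classes
  have hA0 : ∀ s, xs s ⬝ᵥ (G.adjMatrix ℝ *ᵥ xs s) = 0 := by
    intro s
    rw [dotProduct]
    refine Finset.sum_eq_zero fun v' _ => ?_
    rw [Matrix.mulVec, dotProduct, Finset.mul_sum]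
    refine Finset.sum_eq_zero fun u _ => ?_
    by_cases hadj : G.Adj v' u
    · by_cases h1 : C v' = s
      · have h2 : C u ≠ s := by rw [← h1]; exact (C.valid hadj).symm
        simp [hxsdef, h2]
      · simp [hxsdef, h1]
    · simp [SimpleGraph.adjMatrix_apply, hadj]
  -- degree quadratic forms
  have hDsum : ∑ s, xs s ⬝ᵥ (G.degMatrix ℝ *ᵥ xs s) = x ⬝ᵥ (G.degMatrix ℝ *ᵥ x) := by
    simp_rw [SimpleGraph.dotProduct_mulVec_degMatrix]
    exact hw _
  have hxsnorm : ∑ s, xs s ⬝ᵥ xs s = 1 := by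
    have h := hw (fun _ => 1)
    simp only [one_mul] at h
    calc ∑ s, xs s ⬝ᵥ xs s = ∑ v', x v' * x v' := by
          simp only [dotProduct]; exact h
      _ = 1 := by rw [← dotProduct]; exact hx1
  -- Laplacian splits
  have hLsplit : ∀ y : Fin n → ℝ, y ⬝ᵥ (G.lapMatrix ℝ *ᵥ y)
      = y ⬝ᵥ (G.degMatrix ℝ *ᵥ y) - y ⬝ᵥ (G.adjMatrix ℝ *ᵥ y) := by
    intro y
    simp [SimpleGraph.lapMatrix, Matrix.sub_mulVec, dotProduct_sub]
  have hLpos : 0 ≤ x ⬝ᵥ (G.lapMatrix ℝ *ᵥ x) := by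
    simpa using (SimpleGraph.posSemidef_lapMatrix ℝ G).dotProduct_mulVec_nonneg x
  have hDge : μ0 ≤ x ⬝ᵥ (G.degMatrix ℝ *ᵥ x) := by
    have := hLsplit x
    rw [hxA] at this
    linarith [hLpos, this.symm.le, this.le]
  -- Rayleigh bounds
  have hRayL : ∀ y : Fin n → ℝ, y ⬝ᵥ (G.lapMatrix ℝ *ᵥ y) ≤ θ0 * (y ⬝ᵥ y) :=
    rayleigh_upper hL hθtop
  have hRayA : ∀ y : Fin n → ℝ, y ⬝ᵥ (G.adjMatrix ℝ *ᵥ y) ≤ μ0 * (y ⬝ᵥ y) :=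
    rayleigh_upper hA hμtop
  -- μ0 ≥ 1 from the edge
  have hμ0ge1 : (1 : ℝ) ≤ μ0 := by
    have hvw' : v ≠ w := G.ne_of_adj hvw
    set y0 : Fin n → ℝ := Pi.single v 1 + Pi.single w 1 with hy0
    have hy0n : y0 ⬝ᵥ y0 = 2 := by
      simp [hy0, add_dotProduct, dotProduct_add, single_dotProduct,
        dotProduct_single, Pi.single_apply, hvw', hvw'.symm]
      norm_num
    have hy0A : y0 ⬝ᵥ (G.adjMatrix ℝ *ᵥ y0) = 2 := by
      simp [hy0, Matrix.mulVec_add, Matrix.mulVec_single, add_dotProduct,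
        dotProduct_add, single_dotProduct, dotProduct_single,
        SimpleGraph.adjMatrix_apply, hvw, G.adj_symm hvw, G.loopless.irrefl v, G.loopless.irrefl w]
      norm_num
    have := hRayA y0
    rw [hy0A, hy0n] at this
    linarith
  -- the key inequality
  have idL := pair_identity (G.lapMatrix ℝ) xs
  have idI := pair_identity (1 : Matrix (Fin n) (Fin n) ℝ) xs
  rw [hxs_sum] at idL idI
  simp only [Matrix.one_mulVec] at idI
  have hsum_le : ∑ s : Fin χ, ∑ t : Fin χ, (xs s - xs t) ⬝ᵥ (G.lapMatrix ℝ *ᵥ (xs s - xs t))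
      ≤ θ0 * ∑ s : Fin χ, ∑ t : Fin χ, (xs s - xs t) ⬝ᵥ (xs s - xs t) := by
    rw [Finset.mul_sum]
    refine Finset.sum_le_sum fun s _ => ?_
    rw [Finset.mul_sum]
    exact Finset.sum_le_sum fun t _ => hRayL _
  rw [idL, idI] at hsum_le
  have hLsum : ∑ s, xs s ⬝ᵥ (G.lapMatrix ℝ *ᵥ xs s) = x ⬝ᵥ (G.degMatrix ℝ *ᵥ x) := by
    calc ∑ s, xs s ⬝ᵥ (G.lapMatrix ℝ *ᵥ xs s)
        = ∑ s, (xs s ⬝ᵥ (G.degMatrix ℝ *ᵥ xs s) - xs s ⬝ᵥ (G.adjMatrix ℝ *ᵥ xs s)) :=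
          Finset.sum_congr rfl fun s _ => hLsplit _
      _ = _ := by
          simp only [Finset.sum_sub_distrib, hDsum]
          rw [Finset.sum_congr rfl fun s _ => hA0 s]
          simp
  rw [hLsum, hLsplit x, hxA, hxsnorm, hx1] at hsum_le
  -- hsum_le : 2χ D - 2 (D - μ0) ≤ θ0 * (2χ * 1 - 2 * 1)
  set D : ℝ := x ⬝ᵥ (G.degMatrix ℝ *ᵥ x)
  have key : (χ : ℝ) * μ0 ≤ ((χ : ℝ) - 1) * θ0 := by
    nlinarith [mul_nonneg (sub_nonneg.mpr hχ1) (sub_nonneg.mpr hDge)]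
  have part1 : μ0 ≤ ((χ : ℝ) - 1) * (θ0 - μ0) := by nlinarith
  refine ⟨part1, ?_⟩
  have hpos : 0 < θ0 - μ0 := by nlinarith
  have hdiv : μ0 / (θ0 - μ0) ≤ (χ : ℝ) - 1 := (div_le_iff₀ hpos).mpr part1
  linarith
end

section
/- (Kolotilina's first bound.) Let G be a finite simple graph on n vertices with at least one edge and chromatic number χ. Then μ_1 ≤ (χ − 1)·(μ_1 − δ_1 + θ_1); equivalently, χ ≥ 1 + μ_1/(μ_1 − δ_1 + θ_1). -/
open Matrix in
private lemma quad_form_le' {n : ℕ} {M : Matrix (Fin n) (Fin n) ℝ} (hM : M.IsHermitian) {t : ℝ}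
    (ht : ∀ i, hM.eigenvalues i ≤ t) (x : Fin n → ℝ) :
    x ⬝ᵥ (M *ᵥ x) ≤ t * (x ⬝ᵥ x) := by
  set U : Matrix (Fin n) (Fin n) ℝ := (hM.eigenvectorUnitary : Matrix (Fin n) (Fin n) ℝ) with hU
  set y : Fin n → ℝ := star U *ᵥ x with hy
  have hUs : U * star U = 1 := hM.eigenvectorUnitary.2.2
  have hdot : ∀ w : Fin n → ℝ, x ⬝ᵥ (U *ᵥ w) = y ⬝ᵥ w := by
    intro w
    rw [Matrix.dotProduct_mulVec, hy]
    congr 1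
    rw [Matrix.star_eq_conjTranspose, ← Matrix.vecMul_transpose]
    rfl
  have key : x ⬝ᵥ (M *ᵥ x) = ∑ i, hM.eigenvalues i * (y i)^2 := by
    conv_lhs => rw [hM.spectral_theorem, Unitary.conjStarAlgAut_apply]
    rw [← Matrix.mulVec_mulVec, ← Matrix.mulVec_mulVec, hdot]
    simp [dotProduct, Matrix.mulVec_diagonal, Function.comp, sq]
    exact Finset.sum_congr rfl fun i _ => by ring
  have key2 : x ⬝ᵥ x = ∑ i, (y i)^2 := by
    have h : x ⬝ᵥ x = x ⬝ᵥ (U *ᵥ (star U *ᵥ x)) := by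
      rw [Matrix.mulVec_mulVec, hUs, Matrix.one_mulVec]
    rw [h, hdot, ← hy]
    simp [dotProduct, sq]
  rw [key, key2, Finset.mul_sum]
  exact Finset.sum_le_sum fun i _ => mul_le_mul_of_nonneg_right (ht i) (sq_nonneg _)

open Matrix

/-- **Kolotilina's first bound.** For a finite simple graph `G` on `n` vertices with at least
one edge and chromatic number `χ`, `μ_1 ≤ (χ - 1)·(μ_1 - δ_1 + θ_1)`; equivalently
`χ ≥ 1 + μ_1/(μ_1 - δ_1 + θ_1)`.  Here `μ`, `θ`, `δ` are the non-increasing enumerations of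
the eigenvalues of the adjacency matrix, the Laplacian `L = D - A` and the signless
Laplacian `Q = D + A`, respectively. -/
theorem stmt_5 {n : ℕ} (hn : 0 < n) (G : SimpleGraph (Fin n)) [DecidableRel G.Adj]
    (he : ∃ v w : Fin n, G.Adj v w)
    (χ : ℕ) (hχ : G.chromaticNumber = (χ : ℕ∞))
    (hA : (G.adjMatrix ℝ).IsHermitian)
    (hL : (G.lapMatrix ℝ).IsHermitian)
    (hQ : (G.degMatrix ℝ + G.adjMatrix ℝ).IsHermitian)
    (μ θ δ : Fin n → ℝ)
    (hμa : Antitone μ) (hμ : ∃ e : Equiv.Perm (Fin n), μ = hA.eigenvalues ∘ e)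
    (hθa : Antitone θ) (hθ : ∃ e : Equiv.Perm (Fin n), θ = hL.eigenvalues ∘ e)
    (hδa : Antitone δ) (hδ : ∃ e : Equiv.Perm (Fin n), δ = hQ.eigenvalues ∘ e) :
    μ ⟨0, hn⟩ ≤ ((χ : ℝ) - 1) * (μ ⟨0, hn⟩ - δ ⟨0, hn⟩ + θ ⟨0, hn⟩) ∧
    (χ : ℝ) ≥ 1 + μ ⟨0, hn⟩ / (μ ⟨0, hn⟩ - δ ⟨0, hn⟩ + θ ⟨0, hn⟩) := by
  obtain ⟨eμ, hμe⟩ := hμ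
  obtain ⟨eθ, hθe⟩ := hθ
  obtain ⟨eδ, hδe⟩ := hδ
  set i0 : Fin n := ⟨0, hn⟩ with hi0
  have hle0 : ∀ j : Fin n, i0 ≤ j := fun j => by simp [hi0, Fin.le_def]
  have hμmax : ∀ i, hA.eigenvalues i ≤ μ i0 := fun i => by
    have h : hA.eigenvalues i = μ (eμ.symm i) := by rw [hμe]; simp
    rw [h]; exact hμa (hle0 _)
  have hθmax : ∀ i, hL.eigenvalues i ≤ θ i0 := fun i => by
    have h : hL.eigenvalues i = θ (eθ.symm i) := by rw [hθe]; simp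
    rw [h]; exact hθa (hle0 _)
  have hδeq : δ i0 = hQ.eigenvalues (eδ i0) := by rw [hδe]; rfl
  set z : Fin n → ℝ := ⇑(hQ.eigenvectorBasis (eδ i0)) with hzdef
  -- z is a unit vector
  have hz1 : z ⬝ᵥ z = 1 := by
    have h := hQ.eigenvectorBasis.orthonormal.1 (eδ i0)
    have h2 : (inner ℝ (hQ.eigenvectorBasis (eδ i0)) (hQ.eigenvectorBasis (eδ i0)) : ℝ) = 1 := by
      rw [real_inner_self_eq_norm_mul_norm, h]; norm_num
    rw [EuclideanSpace.inner_eq_star_dotProduct] at h2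
    simpa [dotProduct] using h2
  have hzQ : (G.degMatrix ℝ + G.adjMatrix ℝ) *ᵥ z = δ i0 • z := by
    rw [hδeq]; exact hQ.mulVec_eigenvectorBasis (eδ i0)
  set dz : ℝ := z ⬝ᵥ (G.degMatrix ℝ *ᵥ z) with hdzdef
  have haz : z ⬝ᵥ (G.adjMatrix ℝ *ᵥ z) = δ i0 - dz := by
    have h1 : z ⬝ᵥ ((G.degMatrix ℝ + G.adjMatrix ℝ) *ᵥ z) = δ i0 := by
      rw [hzQ, dotProduct_smul, hz1, smul_eq_mul, mul_one]
    rw [Matrix.add_mulVec, dotProduct_add] at h1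
    linarith
  have hA1 : δ i0 - dz ≤ μ i0 := by
    have h := quad_form_le' hA hμmax z
    rw [haz, hz1, mul_one] at h; exact h
  -- μ₁ ≥ 1 from an edge
  obtain ⟨v, w, hvw⟩ := he
  have hμ1 : (1:ℝ) ≤ μ i0 := by
    set x : Fin n → ℝ := Pi.single v 1 + Pi.single w 1 with hx
    have h1 : x ⬝ᵥ (G.adjMatrix ℝ *ᵥ x) = 2 := by
      simp [hx, Matrix.mulVec_add, dotProduct_add, add_dotProduct,
        Matrix.mulVec_single, dotProduct_single, single_dotProduct, hvw, hvw.ne,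
        G.adjMatrix_apply, hvw.symm]
      norm_num
    have h2 : x ⬝ᵥ x = 2 := by
      simp [hx, dotProduct_add, add_dotProduct,
        dotProduct_single, single_dotProduct, hvw.ne, hvw.ne.symm,
        Pi.single_apply]
      norm_num
    have h := quad_form_le' hA hμmax x
    rw [h1, h2] at h; linarith
  -- the coloring
  have hcol : G.Colorable χ := SimpleGraph.chromaticNumber_le_iff_colorable.mp (le_of_eq hχ)
  obtain ⟨C⟩ := hcol
  have hχ2 : (2:ℕ) ≤ χ := by
    have hne : C v ≠ C w := C.valid hvw
    have h : 1 < Fintype.card (Fin χ) := Fintype.one_lt_card_iff_nontrivial.mpr ⟨⟨_, _, hne⟩⟩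
    simp at h; omega
  have hχ2' : (2:ℝ) ≤ (χ:ℝ) := by exact_mod_cast hχ2
  set y : Fin χ → Fin n → ℝ := fun k a => if C a = k then z a else 0 with hydef
  have hsumy : ∀ a, ∑ k, y k a = z a := by
    intro a; simp [hydef]
  have hsumy2 : ∀ a, ∑ k, y k a * y k a = z a * z a := by
    intro a
    have h : ∀ k, y k a * y k a = if C a = k then z a * z a else 0 := fun k => by
      by_cases h : C a = k <;> simp [hydef, h]
    rw [Finset.sum_congr rfl fun k _ => h k]
    simp
  have hyA : ∀ k, y k ⬝ᵥ (G.adjMatrix ℝ *ᵥ y k) = 0 := by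
    intro k
    rw [dotProduct]
    apply Finset.sum_eq_zero; intro a _
    by_cases ha : C a = k
    · rw [Matrix.mulVec, dotProduct, Finset.mul_sum]
      apply Finset.sum_eq_zero; intro b _
      by_cases hb : C b = k
      · have hnadj : ¬ G.Adj a b := fun hadj => C.valid hadj (ha.trans hb.symm)
        simp [hydef, hnadj]
      · simp [hydef, hb]
    · simp [hydef, ha]
  have hsum_dot : ∀ q : Fin n → ℝ, ∑ k, q ⬝ᵥ y k = q ⬝ᵥ z := by
    intro q
    simp only [dotProduct]
    rw [Finset.sum_comm]
    exact Finset.sum_congr rfl fun a _ => by rw [← Finset.mul_sum, hsumy]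
  have hdot_sum : ∀ q : Fin n → ℝ, ∑ k, y k ⬝ᵥ q = z ⬝ᵥ q := by
    intro q
    simp only [dotProduct]
    rw [Finset.sum_comm]
    refine Finset.sum_congr rfl fun a _ => ?_
    rw [show ∀ s : Finset (Fin χ), ∑ k ∈ s, y k a * q a = (∑ k ∈ s, y k a) * q a from
      fun s => (Finset.sum_mul _ _ _).symm, hsumy]
  -- Laplacian quadratic form facts
  have hqLz : z ⬝ᵥ (G.lapMatrix ℝ *ᵥ z) = 2 * dz - δ i0 := by
    rw [SimpleGraph.lapMatrix, Matrix.sub_mulVec, dotProduct_sub, haz, ← hdzdef]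
    ring
  have hS2a : ∑ k, z ⬝ᵥ (G.lapMatrix ℝ *ᵥ y k) = 2 * dz - δ i0 := by
    rw [Finset.sum_congr rfl fun k _ => Matrix.dotProduct_mulVec z (G.lapMatrix ℝ) (y k),
      hsum_dot, ← Matrix.dotProduct_mulVec, hqLz]
  have hS2b : ∑ k, y k ⬝ᵥ (G.lapMatrix ℝ *ᵥ z) = 2 * dz - δ i0 := by
    rw [hdot_sum, hqLz]
  have hS2c : ∑ k, y k ⬝ᵥ (G.lapMatrix ℝ *ᵥ y k) = dz := by
    have h : ∀ k, y k ⬝ᵥ (G.lapMatrix ℝ *ᵥ y k) = y k ⬝ᵥ (G.degMatrix ℝ *ᵥ y k) := by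
      intro k
      rw [SimpleGraph.lapMatrix, Matrix.sub_mulVec, dotProduct_sub, hyA, sub_zero]
    rw [Finset.sum_congr rfl fun k _ => h k]
    have h2 : ∀ k, y k ⬝ᵥ (G.degMatrix ℝ *ᵥ y k)
        = ∑ a, ((G.degree a : ℝ)) * (y k a * y k a) := by
      intro k
      rw [dotProduct]
      exact Finset.sum_congr rfl fun a _ => by
        rw [SimpleGraph.degMatrix_mulVec_apply]; ring
    rw [Finset.sum_congr rfl fun k _ => h2 k, Finset.sum_comm, hdzdef]
    rw [dotProduct]
    refine Finset.sum_congr rfl fun a _ => ?_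
    rw [← Finset.mul_sum, hsumy2, SimpleGraph.degMatrix_mulVec_apply]
    ring
  have hS1a : ∑ k, z ⬝ᵥ y k = 1 := by rw [hsum_dot, hz1]
  have hS1b : ∑ k, y k ⬝ᵥ z = 1 := by rw [hdot_sum, hz1]
  have hS1c : ∑ k, y k ⬝ᵥ y k = 1 := by
    have h : ∀ k, y k ⬝ᵥ y k = ∑ a, y k a * y k a := fun k => rfl
    rw [Finset.sum_congr rfl fun k _ => h k, Finset.sum_comm]
    rw [← hz1, dotProduct]
    exact Finset.sum_congr rfl fun a _ => hsumy2 a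
  -- the pinching inequality
  set c : ℝ := (χ : ℝ) with hcdef
  have hquad : ∀ k, 0 ≤ θ i0 * ((z - c • y k) ⬝ᵥ (z - c • y k))
      - (z - c • y k) ⬝ᵥ (G.lapMatrix ℝ *ᵥ (z - c • y k)) :=
    fun k => sub_nonneg.2 (quad_form_le' hL hθmax _)
  have hexp : ∀ k, θ i0 * ((z - c • y k) ⬝ᵥ (z - c • y k))
      - (z - c • y k) ⬝ᵥ (G.lapMatrix ℝ *ᵥ (z - c • y k))
      = (θ i0 - z ⬝ᵥ (G.lapMatrix ℝ *ᵥ z))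
        + (-(θ i0 * c)) * (z ⬝ᵥ y k) + (-(θ i0 * c)) * (y k ⬝ᵥ z)
        + (θ i0 * c^2) * (y k ⬝ᵥ y k)
        + c * (z ⬝ᵥ (G.lapMatrix ℝ *ᵥ y k)) + c * (y k ⬝ᵥ (G.lapMatrix ℝ *ᵥ z))
        + (-(c^2)) * (y k ⬝ᵥ (G.lapMatrix ℝ *ᵥ y k)) := by
    intro k
    simp only [sub_dotProduct, dotProduct_sub, Matrix.mulVec_sub,
      Matrix.mulVec_smul, smul_dotProduct, dotProduct_smul, smul_eq_mul]
    linear_combination θ i0 * hz1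
  have hsum0 : 0 ≤ ((χ:ℝ)) * (θ i0 - (2 * dz - δ i0))
      + (-(θ i0 * c)) * 1 + (-(θ i0 * c)) * 1 + (θ i0 * c^2) * 1
      + c * (2 * dz - δ i0) + c * (2 * dz - δ i0) + (-(c^2)) * dz := by
    have h := Finset.sum_nonneg (fun k (_ : k ∈ Finset.univ) => hquad k)
    rw [Finset.sum_congr rfl fun k _ => hexp k] at h
    simpa only [Finset.sum_add_distrib, ← Finset.mul_sum, Finset.sum_const,
      Finset.card_univ, Fintype.card_fin, nsmul_eq_mul, hS1a, hS1b, hS1c, hS2a, hS2b, hS2c,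
      hqLz] using h
  -- derive the linear key inequality
  have hB : 0 ≤ ((χ:ℝ) - 1) * θ i0 - ((χ:ℝ) - 2) * dz - δ i0 := by
    have hχpos : (0:ℝ) < (χ:ℝ) := by linarith
    nlinarith [hsum0, hχpos]
  have goal1 : μ i0 ≤ ((χ : ℝ) - 1) * (μ i0 - δ i0 + θ i0) := by
    nlinarith [mul_nonneg (by linarith : (0:ℝ) ≤ (χ:ℝ) - 2) (by linarith : (0:ℝ) ≤ μ i0 - (δ i0 - dz)), hB]
  refine ⟨goal1, ?_⟩
  have hspos : 0 < μ i0 - δ i0 + θ i0 := by nlinarith [goal1, hμ1, hχ2']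
  rw [ge_iff_le, ← sub_nonneg]
  have h := (div_le_iff₀ hspos).mpr goal1
  have : μ i0 / (μ i0 - δ i0 + θ i0) ≤ (χ:ℝ) - 1 := h
  linarith
end

section
/- Let c ≥ 2 be an integer, let A ∈ ℂ^{n×n} be a Hermitian matrix that is colorable with c colors, and let B ∈ ℂ^{n×n} be an arbitrary real diagonal matrix. Then for every m with 1 ≤ m ≤ n: Σ_{i=1}^m λ_i↓(B − A) ≥ Σ_{i=1}^m λ_i↓(B + (1/(c−1))·A) ≥ Σ_{i=1}^m λ_i↓(B + A) − ((c−2)/(c−1))·Σ_{i=1}^m λ_i↓(A). -/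
open Matrix Finset
open scoped InnerProductSpace ComplexOrder
set_option maxHeartbeats 1000000



namespace Stmt7Aux
variable {n : ℕ}

variable {n : ℕ}

lemma filter_eq_map {m : ℕ} (hmn : m ≤ n) :
    (Finset.univ.filter (fun j : Fin n => (j:ℕ) < m)) = Finset.univ.map (Fin.castLEEmb hmn) := by
  ext j
  simp only [mem_filter, mem_univ, true_and, mem_map, Fin.castLEEmb_apply]
  constructor
  · intro hj; exact ⟨⟨j, hj⟩, rfl⟩
  · rintro ⟨i, rfl⟩; exact i.2

lemma sum_filter_lt {m : ℕ} (hmn : m ≤ n) (g : Fin n → ℝ) :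
    ∑ j ∈ Finset.univ.filter (fun j : Fin n => (j:ℕ) < m), g j
      = ∑ i : Fin m, g (Fin.castLE hmn i) := by
  rw [filter_eq_map hmn, Finset.sum_map]; rfl

lemma card_filter_lt {m : ℕ} (hmn : m ≤ n) :
    (Finset.univ.filter (fun j : Fin n => (j:ℕ) < m)).card = m := by
  rw [filter_eq_map hmn, Finset.card_map, Finset.card_univ, Fintype.card_fin]

lemma abel_bound {m : ℕ} (hm1 : 1 ≤ m) (hmn : m ≤ n) (lam s : Fin n → ℝ)
    (hl : Antitone lam) (hs0 : ∀ j, 0 ≤ s j) (hs1 : ∀ j, s j ≤ 1)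
    (hssum : ∑ j, s j = m) :
    ∑ j, lam j * s j ≤ ∑ j ∈ Finset.univ.filter (fun j : Fin n => (j:ℕ) < m), lam j := by
  have hmn' : m - 1 < n := by omega
  set θ := lam ⟨m-1, hmn'⟩ with hθ
  set F := Finset.univ.filter (fun j : Fin n => (j:ℕ) < m) with hF
  have hcard : F.card = m := card_filter_lt hmn
  have h1 : ∀ j ∈ F, lam j * s j ≤ lam j + θ * (s j - 1) := by
    intro j hj
    have hjm : (j:ℕ) < m := by simpa [hF] using hj
    have hθj : θ ≤ lam j := hl (by simp only [Fin.le_def]; omega)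
    nlinarith [hs1 j, hs0 j]
  have h2 : ∀ j ∈ Fᶜ, lam j * s j ≤ θ * s j := by
    intro j hj
    have hjm : ¬ (j:ℕ) < m := by simpa [hF] using hj
    have hθj : lam j ≤ θ := hl (by simp only [Fin.le_def]; omega)
    nlinarith [hs0 j]
  have hsplit : ∑ j ∈ F, s j + ∑ j ∈ Fᶜ, s j = (m:ℝ) := by
    rw [Finset.sum_add_sum_compl, hssum]
  calc ∑ j, lam j * s j
      = ∑ j ∈ F, lam j * s j + ∑ j ∈ Fᶜ, lam j * s j := (Finset.sum_add_sum_compl F _).symm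
    _ ≤ ∑ j ∈ F, (lam j + θ * (s j - 1)) + ∑ j ∈ Fᶜ, θ * s j :=
        add_le_add (Finset.sum_le_sum h1) (Finset.sum_le_sum h2)
    _ = ∑ j ∈ F, lam j := by
        rw [Finset.sum_add_distrib, ← Finset.mul_sum, ← Finset.mul_sum,
          Finset.sum_sub_distrib, Finset.sum_const, hcard, nsmul_eq_mul]
        have h3 : (∑ x ∈ F, s x - (m:ℝ) * 1) = - ∑ i ∈ Fᶜ, s i := by linarith
        rw [h3]; ring


lemma parseval (b : OrthonormalBasis (Fin n) ℂ (EuclideanSpace ℂ (Fin n)))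
    (x : EuclideanSpace ℂ (Fin n)) :
    ∑ j, ‖⟪b j, x⟫_ℂ‖^2 = ‖x‖^2 := by
  have h := b.sum_inner_mul_inner x x
  have h2 : ∀ j, ⟪x, b j⟫_ℂ * ⟪b j, x⟫_ℂ = ((‖⟪b j, x⟫_ℂ‖^2 : ℝ) : ℂ) := by
    intro j
    have hz : ⟪x, b j⟫_ℂ = starRingEnd ℂ ⟪b j, x⟫_ℂ := (inner_conj_symm x (b j)).symm
    rw [hz, mul_comm, Complex.mul_conj, Complex.normSq_eq_norm_sq]
  simp_rw [h2] at h
  rw [inner_self_eq_norm_sq_to_K] at h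
  have h' : ((∑ j, ‖⟪b j, x⟫_ℂ‖^2 : ℝ) : ℂ) = ((‖x‖^2 : ℝ) : ℂ) := by push_cast at h ⊢; exact h
  exact_mod_cast h'

lemma quadform_eq (X : Matrix (Fin n) (Fin n) ℂ) (hX : X.IsHermitian)
    (x : EuclideanSpace ℂ (Fin n)) :
    (star ⇑x ⬝ᵥ X *ᵥ ⇑x) = ((∑ j, hX.eigenvalues j * ‖⟪hX.eigenvectorBasis j, x⟫_ℂ‖^2 : ℝ) : ℂ) := by
  set u := hX.eigenvectorBasis with hu
  set y : EuclideanSpace ℂ (Fin n) := (WithLp.equiv 2 _).symm (X *ᵥ ⇑x) with hy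
  have key : ∀ j, ⟪u j, y⟫_ℂ = (hX.eigenvalues j : ℂ) * ⟪u j, x⟫_ℂ := by
    intro j
    have h1 : ⟪y, u j⟫_ℂ = (hX.eigenvalues j : ℂ) * ⟪x, u j⟫_ℂ := by
      show ⇑(u j) ⬝ᵥ star (X *ᵥ ⇑x) = (hX.eigenvalues j : ℂ) * (⇑(u j) ⬝ᵥ star ⇑x)
      rw [dotProduct_comm, dotProduct_comm (⇑(u j))]
      rw [Matrix.star_mulVec, ← Matrix.dotProduct_mulVec, hX.eq,
        hX.mulVec_eigenvectorBasis j, dotProduct_smul]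
      rw [Complex.real_smul]
    have := congrArg (starRingEnd ℂ) h1
    rw [inner_conj_symm, _root_.map_mul, inner_conj_symm, Complex.conj_ofReal] at this
    exact this
  have h0 : (star ⇑x ⬝ᵥ X *ᵥ ⇑x) = ⟪x, y⟫_ℂ := by
    rw [EuclideanSpace.inner_eq_star_dotProduct]; exact dotProduct_comm _ _
  rw [h0, ← (u.sum_inner_mul_inner x y)]
  have h2 : ∀ j, ⟪x, u j⟫_ℂ * ⟪u j, y⟫_ℂ = ((hX.eigenvalues j * ‖⟪u j, x⟫_ℂ‖^2 : ℝ) : ℂ) := by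
    intro j
    have hz : ⟪x, u j⟫_ℂ = starRingEnd ℂ ⟪u j, x⟫_ℂ := (inner_conj_symm x (u j)).symm
    rw [key j, hz, mul_left_comm, mul_comm ((starRingEnd ℂ) ⟪u j, x⟫_ℂ), Complex.mul_conj,
      Complex.normSq_eq_norm_sq]
    norm_cast
  simp_rw [h2]
  norm_cast



lemma key_upper {m : ℕ} (hm1 : 1 ≤ m) (hmn : m ≤ n)
    (X : Matrix (Fin n) (Fin n) ℂ) (hX : X.IsHermitian)
    (lam : Fin n → ℝ) (hla : Antitone lam) (e : Equiv.Perm (Fin n))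
    (hle : lam = hX.eigenvalues ∘ e)
    (v : Fin m → EuclideanSpace ℂ (Fin n)) (hv : Orthonormal ℂ v) :
    ∑ i, (star ⇑(v i) ⬝ᵥ X *ᵥ ⇑(v i)).re
      ≤ ∑ j ∈ Finset.univ.filter (fun j : Fin n => (j:ℕ) < m), lam j := by
  have h1 : ∀ i, (star ⇑(v i) ⬝ᵥ X *ᵥ ⇑(v i)).re
      = ∑ j, hX.eigenvalues j * ‖⟪hX.eigenvectorBasis j, v i⟫_ℂ‖^2 := fun i => by
    rw [quadform_eq X hX (v i)]; exact Complex.ofReal_re _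
  have hswap : ∑ i, (star ⇑(v i) ⬝ᵥ X *ᵥ ⇑(v i)).re
      = ∑ j, hX.eigenvalues j * ∑ i, ‖⟪hX.eigenvectorBasis j, v i⟫_ℂ‖^2 :=
    calc ∑ i, (star ⇑(v i) ⬝ᵥ X *ᵥ ⇑(v i)).re
        = ∑ i, ∑ j, hX.eigenvalues j * ‖⟪hX.eigenvectorBasis j, v i⟫_ℂ‖^2 :=
          Finset.sum_congr rfl (fun i _ => h1 i)
      _ = ∑ j, ∑ i, hX.eigenvalues j * ‖⟪hX.eigenvectorBasis j, v i⟫_ℂ‖^2 := Finset.sum_comm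
      _ = ∑ j, hX.eigenvalues j * ∑ i, ‖⟪hX.eigenvectorBasis j, v i⟫_ℂ‖^2 :=
          Finset.sum_congr rfl (fun j _ => (Finset.mul_sum _ _ _).symm)
  have ht0 : ∀ j, 0 ≤ ∑ i, ‖⟪hX.eigenvectorBasis j, v i⟫_ℂ‖^2 :=
    fun j => Finset.sum_nonneg fun i _ => sq_nonneg _
  have ht1 : ∀ j, (∑ i, ‖⟪hX.eigenvectorBasis j, v i⟫_ℂ‖^2) ≤ 1 := by
    intro j
    have hb := hv.sum_inner_products_le (𝕜 := ℂ) (hX.eigenvectorBasis j) (s := Finset.univ)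
    have hnorm : ‖hX.eigenvectorBasis j‖ = 1 := hX.eigenvectorBasis.orthonormal.1 j
    have heq : (∑ i, ‖⟪hX.eigenvectorBasis j, v i⟫_ℂ‖^2)
        = ∑ i, ‖⟪v i, hX.eigenvectorBasis j⟫_ℂ‖^2 :=
      Finset.sum_congr rfl fun i _ => by
        rw [← inner_conj_symm (hX.eigenvectorBasis j) (v i), RCLike.norm_conj]
    rw [heq]
    calc (∑ i, ‖⟪v i, hX.eigenvectorBasis j⟫_ℂ‖^2) ≤ ‖hX.eigenvectorBasis j‖^2 := hb
      _ = 1 := by rw [hnorm]; norm_num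
  have htsum : ∑ j, ∑ i, ‖⟪hX.eigenvectorBasis j, v i⟫_ℂ‖^2 = (m:ℝ) := by
    rw [Finset.sum_comm]
    have h2 : ∀ i, ∑ j, ‖⟪hX.eigenvectorBasis j, v i⟫_ℂ‖^2 = 1 := by
      intro i
      rw [parseval hX.eigenvectorBasis (v i), hv.1 i]; norm_num
    calc ∑ i, ∑ j, ‖⟪hX.eigenvectorBasis j, v i⟫_ℂ‖^2 = ∑ _i : Fin m, (1:ℝ) :=
          Finset.sum_congr rfl fun i _ => h2 i
      _ = (m:ℝ) := by simp
  have hperm : ∑ j, hX.eigenvalues j * ∑ i, ‖⟪hX.eigenvectorBasis j, v i⟫_ℂ‖^2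
      = ∑ j, lam j * ∑ i, ‖⟪hX.eigenvectorBasis (e j), v i⟫_ℂ‖^2 := by
    rw [← Equiv.sum_comp e
      (fun j => hX.eigenvalues j * ∑ i, ‖⟪hX.eigenvectorBasis j, v i⟫_ℂ‖^2), hle]
    rfl
  rw [hswap, hperm]
  exact abel_bound hm1 hmn lam (fun j => ∑ i, ‖⟪hX.eigenvectorBasis (e j), v i⟫_ℂ‖^2) hla
    (fun j => ht0 _) (fun j => ht1 _)
    (by rw [Equiv.sum_comp e (fun j => ∑ i, ‖⟪hX.eigenvectorBasis j, v i⟫_ℂ‖^2)]; exact htsum)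

lemma key_exists {m : ℕ} (hmn : m ≤ n)
    (X : Matrix (Fin n) (Fin n) ℂ) (hX : X.IsHermitian)
    (lam : Fin n → ℝ) (e : Equiv.Perm (Fin n)) (hle : lam = hX.eigenvalues ∘ e) :
    ∃ v : Fin m → EuclideanSpace ℂ (Fin n), Orthonormal ℂ v ∧
      ∑ i, (star ⇑(v i) ⬝ᵥ X *ᵥ ⇑(v i)).re
        = ∑ j ∈ Finset.univ.filter (fun j : Fin n => (j:ℕ) < m), lam j := by
  refine ⟨fun i => hX.eigenvectorBasis (e (Fin.castLE hmn i)),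
    hX.eigenvectorBasis.orthonormal.comp _ (e.injective.comp (Fin.castLE_injective hmn)), ?_⟩
  rw [sum_filter_lt hmn]
  apply Finset.sum_congr rfl
  intro i _
  have h := hX.eigenvalues_eq (e (Fin.castLE hmn i))
  rw [hle]
  simp only [Function.comp_apply]
  rw [h]
  rfl



noncomputable def om (c : ℕ) : ℂ := Complex.exp (2 * Real.pi * Complex.I / c)

lemma om_ne_zero (c : ℕ) : om c ≠ 0 := Complex.exp_ne_zero _

lemma om_prim (c : ℕ) (hc : 2 ≤ c) : IsPrimitiveRoot (om c) c := by
  have := Complex.isPrimitiveRoot_exp c (by omega)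
  simpa [om] using this

lemma star_om_zpow (c : ℕ) (z : ℤ) : star ((om c) ^ z) = (om c) ^ (-z) := by
  have h1 : star (om c) = (om c)⁻¹ := by
    rw [om, Complex.star_def, ← Complex.exp_conj, ← Complex.exp_neg]
    congr 1
    rw [map_div₀, _root_.map_mul, Complex.conj_I]
    simp [Complex.conj_ofReal, map_ofNat]
    ring
  rw [_root_.zpow_neg, star_zpow₀, h1, _root_.inv_zpow]

lemma sum_om_zpow (c : ℕ) (hc : 2 ≤ c) (d : ℤ) (hd : d ≠ 0) (hdlt : d.natAbs < c) :
    ∑ j ∈ Finset.range c, (om c) ^ ((j:ℤ) * d) = 0 := by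
  have hωd : (om c) ^ d ≠ 1 := by
    intro h
    have := ((om_prim c hc).zpow_eq_one_iff_dvd d).mp h
    have habs : (c:ℤ) ∣ d := this
    have h2 : c ∣ d.natAbs := by
      have := Int.natAbs_dvd_natAbs.mpr habs
      simpa using this
    have h3 : 0 < d.natAbs := by omega
    have := Nat.le_of_dvd h3 h2
    omega
  have hpow : ((om c) ^ d) ^ c = 1 := by
    rw [← zpow_natCast ((om c)^d) c, ← _root_.zpow_mul, mul_comm, _root_.zpow_mul, zpow_natCast,
      (om_prim c hc).pow_eq_one, _root_.one_zpow]
  have hgeom : ∑ j ∈ Finset.range c, ((om c) ^ d) ^ j = 0 := by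
    rw [geom_sum_eq hωd, hpow]
    simp
  calc ∑ j ∈ Finset.range c, (om c) ^ ((j:ℤ) * d)
      = ∑ j ∈ Finset.range c, ((om c) ^ d) ^ j := by
        refine Finset.sum_congr rfl fun j _ => ?_
        rw [← zpow_natCast ((om c)^d) j, ← _root_.zpow_mul, mul_comm]
    _ = 0 := hgeom




noncomputable def tw (c : ℕ) (f : Fin n → Fin c) (j : ℕ) (v : Fin n → ℂ) : Fin n → ℂ :=
  fun k => (om c) ^ (-((j:ℤ) * ((f k : ℕ) : ℤ))) * v k

lemma om_cancel (c : ℕ) (a : ℤ) : (om c)^a * (om c)^(-a) = 1 := by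
  rw [_root_.zpow_neg, mul_inv_cancel₀ (zpow_ne_zero _ (om_ne_zero c))]

lemma tw_mul_star (c : ℕ) (f : Fin n → Fin c) (j : ℕ) (v w : Fin n → ℂ) (k : Fin n) :
    star (tw c f j v k) * tw c f j w k = star (v k) * w k := by
  simp only [tw, star_mul', star_om_zpow, neg_neg]
  calc (om c)^((j:ℤ) * ((f k : ℕ) : ℤ)) * star (v k) * ((om c)^(-((j:ℤ) * ((f k : ℕ) : ℤ))) * w k)
      = ((om c)^((j:ℤ) * ((f k : ℕ) : ℤ)) * (om c)^(-((j:ℤ) * ((f k : ℕ) : ℤ)))) * (star (v k) * w k) := by ring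
    _ = star (v k) * w k := by rw [om_cancel]; ring

lemma tw_zero (c : ℕ) (f : Fin n → Fin c) (v : Fin n → ℂ) : tw c f 0 v = v := by
  funext k; simp [tw]

lemma tw_inner (c : ℕ) (f : Fin n → Fin c) (j : ℕ) (x y : EuclideanSpace ℂ (Fin n)) :
    ⟪((WithLp.equiv 2 (Fin n → ℂ)).symm (tw c f j ⇑x)), ((WithLp.equiv 2 (Fin n → ℂ)).symm (tw c f j ⇑y))⟫_ℂ = ⟪x, y⟫_ℂ := by
  show (tw c f j ⇑y) ⬝ᵥ star (tw c f j ⇑x) = ⇑y ⬝ᵥ star ⇑x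
  rw [dotProduct_comm, dotProduct_comm ⇑y]
  simp only [dotProduct, Pi.star_apply]
  exact Finset.sum_congr rfl fun k _ => tw_mul_star c f j ⇑x ⇑y k

lemma tw_quad_diag (c : ℕ) (f : Fin n → Fin c) (j : ℕ) (d : Fin n → ℂ) (v : Fin n → ℂ) :
    star (tw c f j v) ⬝ᵥ (diagonal d *ᵥ tw c f j v) = star v ⬝ᵥ (diagonal d *ᵥ v) := by
  simp only [dotProduct, Matrix.mulVec_diagonal, Pi.star_apply]
  refine Finset.sum_congr rfl fun k _ => ?_
  have h := tw_mul_star c f j v v k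
  calc star (tw c f j v k) * (d k * tw c f j v k)
      = d k * (star (tw c f j v k) * tw c f j v k) := by ring
    _ = d k * (star (v k) * v k) := by rw [h]
    _ = star (v k) * (d k * v k) := by ring

lemma tw_quad_A_sum (c : ℕ) (hc : 2 ≤ c) (f : Fin n → Fin c)
    (A : Matrix (Fin n) (Fin n) ℂ) (hf : ∀ k l : Fin n, f k = f l → A k l = 0)
    (v : Fin n → ℂ) :
    ∑ j ∈ Finset.range c, star (tw c f j v) ⬝ᵥ (A *ᵥ tw c f j v) = 0 := by
  have expand : ∀ j : ℕ, star (tw c f j v) ⬝ᵥ (A *ᵥ tw c f j v)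
      = ∑ k, ∑ l, (om c)^((j:ℤ) * (((f k : ℕ) : ℤ) - ((f l : ℕ) : ℤ))) * (star (v k) * A k l * v l) := by
    intro j
    simp only [dotProduct, Matrix.mulVec, Pi.star_apply, Finset.mul_sum]
    refine Finset.sum_congr rfl fun k _ => Finset.sum_congr rfl fun l _ => ?_
    simp only [tw, star_mul', star_om_zpow, neg_neg]
    have hsplit : (om c)^((j:ℤ) * (((f k : ℕ) : ℤ) - ((f l : ℕ) : ℤ)))
        = (om c)^((j:ℤ) * ((f k : ℕ) : ℤ)) * (om c)^(-((j:ℤ) * ((f l : ℕ) : ℤ))) := by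
      rw [← zpow_add₀ (om_ne_zero c)]
      congr 1
      ring
    rw [hsplit]
    ring
  calc ∑ j ∈ Finset.range c, star (tw c f j v) ⬝ᵥ (A *ᵥ tw c f j v)
      = ∑ j ∈ Finset.range c, ∑ k, ∑ l,
          (om c)^((j:ℤ) * (((f k : ℕ) : ℤ) - ((f l : ℕ) : ℤ))) * (star (v k) * A k l * v l) :=
        Finset.sum_congr rfl fun j _ => expand j
    _ = ∑ k, ∑ l, ∑ j ∈ Finset.range c,
          (om c)^((j:ℤ) * (((f k : ℕ) : ℤ) - ((f l : ℕ) : ℤ))) * (star (v k) * A k l * v l) := by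
        rw [Finset.sum_comm]
        exact Finset.sum_congr rfl fun k _ => Finset.sum_comm
    _ = 0 := by
        refine Finset.sum_eq_zero fun k _ => Finset.sum_eq_zero fun l _ => ?_
        rw [← Finset.sum_mul]
        rcases eq_or_ne (f k) (f l) with h | h
        · rw [hf k l h]
          ring
        · have hd : (((f k : ℕ) : ℤ) - ((f l : ℕ) : ℤ)) ≠ 0 := by
            intro h0
            apply h
            have : ((f k : ℕ) : ℤ) = ((f l : ℕ) : ℤ) := by omega
            exact Fin.ext (by exact_mod_cast this)
          have hdlt : (((f k : ℕ) : ℤ) - ((f l : ℕ) : ℤ)).natAbs < c := by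
            have h1 := (f k).2
            have h2 := (f l).2
            omega
          rw [sum_om_zpow c hc _ hd hdlt]
          ring
end Stmt7Aux


namespace Stmt7Aux
variable {n : ℕ}

-- quadratic form linearity helpers
lemma quad_add (X Y : Matrix (Fin n) (Fin n) ℂ) (x : Fin n → ℂ) :
    star x ⬝ᵥ (X + Y) *ᵥ x = star x ⬝ᵥ X *ᵥ x + star x ⬝ᵥ Y *ᵥ x := by
  rw [Matrix.add_mulVec, dotProduct_add]

lemma quad_sub (X Y : Matrix (Fin n) (Fin n) ℂ) (x : Fin n → ℂ) :
    star x ⬝ᵥ (X - Y) *ᵥ x = star x ⬝ᵥ X *ᵥ x - star x ⬝ᵥ Y *ᵥ x := by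
  rw [Matrix.sub_mulVec, dotProduct_sub]

lemma quad_smul (s : ℂ) (X : Matrix (Fin n) (Fin n) ℂ) (x : Fin n → ℂ) :
    star x ⬝ᵥ (s • X) *ᵥ x = s * (star x ⬝ᵥ X *ᵥ x) := by
  rw [Matrix.smul_mulVec, dotProduct_smul, smul_eq_mul]

end Stmt7Aux

open Stmt7Aux

/-- **Majorization generalization of Nikiforov's theorem.** If the Hermitian matrix `A` is
colorable with `c ≥ 2` colors and `B` is a real diagonal matrix, then for every
`1 ≤ m ≤ n` the sum of the `m` largest eigenvalues satisfies
`Σ_{i<m} λ_i↓(B-A) ≥ Σ_{i<m} λ_i↓(B + (1/(c-1))•A)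
  ≥ Σ_{i<m} λ_i↓(B+A) - ((c-2)/(c-1))·Σ_{i<m} λ_i↓(A)`.
Here `μ`, `κ`, `ν`, `α` are the non-increasing enumerations of the eigenvalues of
`B - A`, `B + (1/(c-1))•A`, `B + A` and `A` respectively. -/
theorem stmt_7 {n : ℕ} (c : ℕ) (hc : 2 ≤ c)
    (A B : Matrix (Fin n) (Fin n) ℂ) (hA : A.IsHermitian)
    (f : Fin n → Fin c) (hf : ∀ k l : Fin n, f k = f l → A k l = 0)
    (b : Fin n → ℝ) (hB : B = Matrix.diagonal fun i => (b i : ℂ))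
    (hBmA : (B - A).IsHermitian)
    (hBcA : (B + ((c : ℂ) - 1)⁻¹ • A).IsHermitian)
    (hBpA : (B + A).IsHermitian)
    (μ κ ν α : Fin n → ℝ)
    (hμa : Antitone μ) (hμ : ∃ e : Equiv.Perm (Fin n), μ = hBmA.eigenvalues ∘ e)
    (hκa : Antitone κ) (hκ : ∃ e : Equiv.Perm (Fin n), κ = hBcA.eigenvalues ∘ e)
    (hνa : Antitone ν) (hν : ∃ e : Equiv.Perm (Fin n), ν = hBpA.eigenvalues ∘ e)
    (hαa : Antitone α) (hα : ∃ e : Equiv.Perm (Fin n), α = hA.eigenvalues ∘ e)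
    (m : ℕ) (hm1 : 1 ≤ m) (hmn : m ≤ n) :
    (∑ i ∈ Finset.univ.filter (fun i : Fin n => (i : ℕ) < m), μ i) ≥
      (∑ i ∈ Finset.univ.filter (fun i : Fin n => (i : ℕ) < m), κ i) ∧
    (∑ i ∈ Finset.univ.filter (fun i : Fin n => (i : ℕ) < m), κ i) ≥
      (∑ i ∈ Finset.univ.filter (fun i : Fin n => (i : ℕ) < m), ν i) -
        (((c : ℝ) - 2) / ((c : ℝ) - 1)) *
          (∑ i ∈ Finset.univ.filter (fun i : Fin n => (i : ℕ) < m), α i) := by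
  obtain ⟨eμ, heμ⟩ := hμ
  obtain ⟨eκ, heκ⟩ := hκ
  obtain ⟨eν, heν⟩ := hν
  obtain ⟨eα, heα⟩ := hα
  have hcR : (1:ℝ) < (c:ℝ) := by exact_mod_cast (by omega : 1 < c)
  have hc1R : (0:ℝ) < (c:ℝ) - 1 := by linarith
  have hc1C : ((c:ℂ) - 1) ≠ 0 := by
    intro h
    have : ((c:ℝ) - 1 : ℝ) = 0 := by exact_mod_cast (by push_cast at h ⊢; exact_mod_cast h : (((c:ℝ) - 1 : ℝ) : ℂ) = 0)
    linarith
  constructor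
  · -- Part 1 : Σμ ≥ Σκ
    obtain ⟨v, hvON, hvsum⟩ := key_exists hmn (B + ((c : ℂ) - 1)⁻¹ • A) hBcA κ eκ heκ
    set W : ℕ → Fin m → EuclideanSpace ℂ (Fin n) :=
      fun j i => (WithLp.equiv 2 (Fin n → ℂ)).symm (tw c f j ⇑(v i)) with hW
    have hWon : ∀ j, Orthonormal ℂ (W j) := by
      intro j
      rw [orthonormal_iff_ite]
      intro i i'
      rw [hW]
      rw [tw_inner c f j (v i) (v i')]
      exact orthonormal_iff_ite.mp hvON i i'
    have hub : ∀ j, ∑ i, (star (tw c f j ⇑(v i)) ⬝ᵥ (B - A) *ᵥ tw c f j ⇑(v i)).re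
        ≤ ∑ i ∈ Finset.univ.filter (fun i : Fin n => (i : ℕ) < m), μ i := by
      intro j
      exact key_upper hm1 hmn (B - A) hBmA μ hμa eμ heμ (W j) (hWon j)
    -- complex identity
    have hkey : ∀ i, ∑ j ∈ (Finset.range c).erase 0,
        (star (tw c f j ⇑(v i)) ⬝ᵥ (B - A) *ᵥ tw c f j ⇑(v i))
        = ((c:ℂ) - 1) * (star ⇑(v i) ⬝ᵥ (B + ((c : ℂ) - 1)⁻¹ • A) *ᵥ ⇑(v i)) := by
      intro i
      have hAsum := tw_quad_A_sum c hc f A hf ⇑(v i)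
      have h0mem : (0:ℕ) ∈ Finset.range c := Finset.mem_range.mpr (by omega)
      have hAsplit := Finset.sum_erase_add (Finset.range c)
        (fun j => star (tw c f j ⇑(v i)) ⬝ᵥ (A *ᵥ tw c f j ⇑(v i))) h0mem
      simp only [tw_zero] at hAsplit
      have hAerase : ∑ j ∈ (Finset.range c).erase 0, star (tw c f j ⇑(v i)) ⬝ᵥ (A *ᵥ tw c f j ⇑(v i))
          = - (star ⇑(v i) ⬝ᵥ (A *ᵥ ⇑(v i))) := by linear_combination hAsplit + hAsum
      have hBj : ∀ j, star (tw c f j ⇑(v i)) ⬝ᵥ (B *ᵥ tw c f j ⇑(v i))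
          = star ⇑(v i) ⬝ᵥ (B *ᵥ ⇑(v i)) := by
        intro j
        rw [hB]
        exact tw_quad_diag c f j _ ⇑(v i)
      have hcarde : ((Finset.range c).erase 0).card = c - 1 := by
        rw [Finset.card_erase_of_mem h0mem, Finset.card_range]
      calc ∑ j ∈ (Finset.range c).erase 0, (star (tw c f j ⇑(v i)) ⬝ᵥ (B - A) *ᵥ tw c f j ⇑(v i))
          = ∑ j ∈ (Finset.range c).erase 0,
              (star (tw c f j ⇑(v i)) ⬝ᵥ (B *ᵥ tw c f j ⇑(v i))
               - star (tw c f j ⇑(v i)) ⬝ᵥ (A *ᵥ tw c f j ⇑(v i))) :=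
            Finset.sum_congr rfl fun j _ => quad_sub B A _
        _ = (((c:ℕ) - 1 : ℕ) : ℂ) * (star ⇑(v i) ⬝ᵥ (B *ᵥ ⇑(v i)))
              + star ⇑(v i) ⬝ᵥ (A *ᵥ ⇑(v i)) := by
            rw [Finset.sum_sub_distrib, hAerase]
            rw [Finset.sum_congr rfl (fun j _ => hBj j), Finset.sum_const, hcarde, nsmul_eq_mul]
            ring
        _ = ((c:ℂ) - 1) * (star ⇑(v i) ⬝ᵥ (B + ((c : ℂ) - 1)⁻¹ • A) *ᵥ ⇑(v i)) := by
            rw [quad_add, quad_smul]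
            have hcast : (((c:ℕ) - 1 : ℕ) : ℂ) = (c:ℂ) - 1 := by
              push_cast [Nat.cast_sub (by omega : 1 ≤ c)]
              ring
            rw [hcast]
            field_simp
    -- pass to real parts
    have hreal : ∑ j ∈ (Finset.range c).erase 0,
        ∑ i, (star (tw c f j ⇑(v i)) ⬝ᵥ (B - A) *ᵥ tw c f j ⇑(v i)).re
        = ((c:ℝ) - 1) * ∑ i, (star ⇑(v i) ⬝ᵥ (B + ((c : ℂ) - 1)⁻¹ • A) *ᵥ ⇑(v i)).re := by
      have hswap : ∑ j ∈ (Finset.range c).erase 0,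
          ∑ i, (star (tw c f j ⇑(v i)) ⬝ᵥ (B - A) *ᵥ tw c f j ⇑(v i)).re
          = ∑ i, ∑ j ∈ (Finset.range c).erase 0,
            (star (tw c f j ⇑(v i)) ⬝ᵥ (B - A) *ᵥ tw c f j ⇑(v i)).re := Finset.sum_comm
      rw [hswap, Finset.mul_sum]
      refine Finset.sum_congr rfl fun i _ => ?_
      have hth := congrArg Complex.re (hkey i)
      rw [Complex.re_sum] at hth
      rw [hth, Complex.mul_re]
      simp
    have hfinal : ((c:ℝ) - 1) * (∑ i ∈ Finset.univ.filter (fun i : Fin n => (i : ℕ) < m), κ i)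
        ≤ ((c:ℝ) - 1) * (∑ i ∈ Finset.univ.filter (fun i : Fin n => (i : ℕ) < m), μ i) := by
      rw [← hvsum, ← hreal]
      have hcarde : ((Finset.range c).erase 0).card = c - 1 := by
        rw [Finset.card_erase_of_mem (Finset.mem_range.mpr (by omega : 0 < c)), Finset.card_range]
      calc ∑ j ∈ (Finset.range c).erase 0,
            ∑ i, (star (tw c f j ⇑(v i)) ⬝ᵥ (B - A) *ᵥ tw c f j ⇑(v i)).re
          ≤ ∑ _j ∈ (Finset.range c).erase 0,
            ∑ i ∈ Finset.univ.filter (fun i : Fin n => (i : ℕ) < m), μ i :=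
            Finset.sum_le_sum fun j _ => hub j
        _ = ((c:ℝ) - 1) * ∑ i ∈ Finset.univ.filter (fun i : Fin n => (i : ℕ) < m), μ i := by
            rw [Finset.sum_const, hcarde, nsmul_eq_mul]
            congr 1
            push_cast [Nat.cast_sub (by omega : 1 ≤ c)]
            ring
    exact le_of_mul_le_mul_left hfinal hc1R
  · -- Part 2
    obtain ⟨v, hvON, hvsum⟩ := key_exists hmn (B + A) hBpA ν eν heν
    have h1 : ∑ i, (star ⇑(v i) ⬝ᵥ (B + ((c : ℂ) - 1)⁻¹ • A) *ᵥ ⇑(v i)).re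
        ≤ ∑ i ∈ Finset.univ.filter (fun i : Fin n => (i : ℕ) < m), κ i :=
      key_upper hm1 hmn _ hBcA κ hκa eκ heκ v hvON
    have h2 : ∑ i, (star ⇑(v i) ⬝ᵥ A *ᵥ ⇑(v i)).re
        ≤ ∑ i ∈ Finset.univ.filter (fun i : Fin n => (i : ℕ) < m), α i :=
      key_upper hm1 hmn A hA α hαa eα heα v hvON
    have hM : B + A = (B + ((c : ℂ) - 1)⁻¹ • A) + ((((c:ℂ) - 2) / ((c:ℂ) - 1)) • A) := by
      rw [add_assoc, ← add_smul]
      have : ((c : ℂ) - 1)⁻¹ + ((c:ℂ) - 2) / ((c:ℂ) - 1) = 1 := by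
        field_simp
        ring
      rw [this, one_smul]
    have hsR : (0:ℝ) ≤ ((c:ℝ) - 2) / ((c:ℝ) - 1) := by
      apply div_nonneg
      · have : (2:ℝ) ≤ (c:ℝ) := by exact_mod_cast hc
        linarith
      · linarith
    have hsplit : ∀ i, (star ⇑(v i) ⬝ᵥ (B + A) *ᵥ ⇑(v i)).re
        = (star ⇑(v i) ⬝ᵥ (B + ((c : ℂ) - 1)⁻¹ • A) *ᵥ ⇑(v i)).re
          + (((c:ℝ) - 2) / ((c:ℝ) - 1)) * (star ⇑(v i) ⬝ᵥ A *ᵥ ⇑(v i)).re := by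
      intro i
      rw [hM, quad_add, quad_smul]
      have hcast : (((c:ℂ) - 2) / ((c:ℂ) - 1)) = ((((c:ℝ) - 2) / ((c:ℝ) - 1) : ℝ) : ℂ) := by
        push_cast; ring
      rw [Complex.add_re, hcast, Complex.re_ofReal_mul]
    have hν' : ∑ i ∈ Finset.univ.filter (fun i : Fin n => (i : ℕ) < m), ν i
        = ∑ i, (star ⇑(v i) ⬝ᵥ (B + ((c : ℂ) - 1)⁻¹ • A) *ᵥ ⇑(v i)).re
          + (((c:ℝ) - 2) / ((c:ℝ) - 1)) * ∑ i, (star ⇑(v i) ⬝ᵥ A *ᵥ ⇑(v i)).re := by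
      rw [← hvsum]
      rw [Finset.sum_congr rfl (fun i _ => hsplit i), Finset.sum_add_distrib, Finset.mul_sum]
    have := add_le_add h1 (mul_le_mul_of_nonneg_left h2 hsR)
    rw [ge_iff_le, sub_le_iff_le_add]
    calc ∑ i ∈ Finset.univ.filter (fun i : Fin n => (i : ℕ) < m), ν i
        ≤ (∑ i ∈ Finset.univ.filter (fun i : Fin n => (i : ℕ) < m), κ i)
          + (((c:ℝ) - 2) / ((c:ℝ) - 1)) * ∑ i ∈ Finset.univ.filter (fun i : Fin n => (i : ℕ) < m), α i := by
          rw [hν']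
          exact this
      _ = _ := by ring
end

section
/- (Generalized Hoffman bound.) Let G be a finite simple graph on n vertices with at least one edge and chromatic number χ. Then for every m with 1 ≤ m ≤ n: Σ_{i=1}^m μ_i ≤ (χ − 1)·Σ_{i=1}^m (−μ_{n+1−i}); equivalently, whenever Σ_{i=1}^m (−μ_{n+1−i}) > 0 one has χ ≥ 1 + (Σ_{i=1}^m μ_i)/(Σ_{i=1}^m (−μ_{n+1−i})). -/
open Matrix Finset

private lemma card_flt {n m : ℕ} (hmn : m ≤ n) :
    (Finset.univ.filter (fun i : Fin n => (i : ℕ) < m)).card = m := by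
  have h : Finset.univ.filter (fun i : Fin n => (i : ℕ) < m)
      = Finset.attachFin (Finset.range m)
        (fun k hk => lt_of_lt_of_le (Finset.mem_range.mp hk) hmn) := by
    ext i; simp [Finset.mem_attachFin]
  rw [h, Finset.card_attachFin, Finset.card_range]

private lemma card_fge {n m : ℕ} (hmn : m ≤ n) :
    (Finset.univ.filter (fun i : Fin n => n - m ≤ (i : ℕ))).card = m := by
  have h : Finset.univ.filter (fun i : Fin n => n - m ≤ (i : ℕ))
      = Finset.attachFin (Finset.Ico (n - m) n)
        (fun k hk => (Finset.mem_Ico.mp hk).2) := by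
    ext i; simp [Finset.mem_attachFin, Finset.mem_Ico, i.isLt]
  rw [h, Finset.card_attachFin, Nat.card_Ico]
  omega

private lemma maj_lower {n m : ℕ} (hm1 : 1 ≤ m) (hmn : m ≤ n) (ν : Fin n → ℝ)
    (hν : Antitone ν) (s : Fin n → ℝ) (h0 : ∀ i, 0 ≤ s i) (h1 : ∀ i, s i ≤ 1)
    (hs : ∑ i, s i = m) :
    ∑ i ∈ Finset.univ.filter (fun i : Fin n => n - m ≤ (i : ℕ)), ν i ≤ ∑ i, s i * ν i := by
  have hn : 0 < n := lt_of_lt_of_le hm1 hmn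
  set q : Fin n := ⟨n - m, by omega⟩ with hq
  have hind : ∑ i : Fin n, (if n - m ≤ (i : ℕ) then (1:ℝ) else 0) = m := by
    rw [Finset.sum_ite, Finset.sum_const, Finset.sum_const, card_fge hmn]
    simp
  have key : ∀ i : Fin n, (s i - (if n - m ≤ (i : ℕ) then (1:ℝ) else 0)) * ν q
      ≤ (s i - (if n - m ≤ (i : ℕ) then (1:ℝ) else 0)) * ν i := by
    intro i
    by_cases hi : n - m ≤ (i : ℕ)
    · simp only [hi, if_pos]
      have hqi : q ≤ i := by simp [hq, Fin.le_def]; omega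
      have := hν hqi
      nlinarith [h1 i]
    · simp only [hi, if_neg, not_false_iff, sub_zero]
      have hiq : i ≤ q := by simp [hq, Fin.le_def]; omega
      have := hν hiq
      nlinarith [h0 i]
  have hsum : (∑ i : Fin n, (s i - (if n - m ≤ (i : ℕ) then (1:ℝ) else 0)) * ν q) = 0 := by
    have : (∑ i : Fin n, (s i - (if n - m ≤ (i : ℕ) then (1:ℝ) else 0))) = 0 := by
      rw [Finset.sum_sub_distrib, hs, hind]; ring
    rw [← Finset.sum_mul, this, zero_mul]
  have h2 : 0 ≤ ∑ i : Fin n, ((s i - (if n - m ≤ (i : ℕ) then (1:ℝ) else 0)) * ν i) := by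
    have h2' := Finset.sum_le_sum (f := fun i : Fin n => (s i - (if n - m ≤ (i : ℕ) then (1:ℝ) else 0)) * ν q)
      (g := fun i : Fin n => (s i - (if n - m ≤ (i : ℕ) then (1:ℝ) else 0)) * ν i)
      (fun i (_ : i ∈ Finset.univ) => key i)
    rwa [hsum] at h2'
  have h3 : ∑ i ∈ Finset.univ.filter (fun i : Fin n => n - m ≤ (i : ℕ)), ν i
      = ∑ i : Fin n, (if n - m ≤ (i : ℕ) then (1:ℝ) else 0) * ν i := by
    rw [Finset.sum_filter]
    exact Finset.sum_congr rfl (fun i _ => by by_cases hi : n - m ≤ (i : ℕ) <;> simp [hi]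
      )
  have h4 : ∑ i : Fin n, ((s i - (if n - m ≤ (i : ℕ) then (1:ℝ) else 0)) * ν i)
      = ∑ i, s i * ν i - ∑ i : Fin n, (if n - m ≤ (i : ℕ) then (1:ℝ) else 0) * ν i := by
    rw [← Finset.sum_sub_distrib]
    exact Finset.sum_congr rfl (fun i _ => by ring)
  rw [h3]; linarith [h2, h4.symm]

private lemma maj_upper {n m : ℕ} (hm1 : 1 ≤ m) (hmn : m ≤ n) (ν : Fin n → ℝ)
    (hν : Antitone ν) (s : Fin n → ℝ) (h0 : ∀ i, 0 ≤ s i) (h1 : ∀ i, s i ≤ 1)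
    (hs : ∑ i, s i = m) :
    ∑ i, s i * ν i ≤ ∑ i ∈ Finset.univ.filter (fun i : Fin n => (i : ℕ) < m), ν i := by
  have hn : 0 < n := lt_of_lt_of_le hm1 hmn
  set q : Fin n := ⟨m - 1, by omega⟩ with hq
  have hind : ∑ i : Fin n, (if (i : ℕ) < m then (1:ℝ) else 0) = m := by
    rw [Finset.sum_ite, Finset.sum_const, Finset.sum_const, card_flt hmn]
    simp
  have key : ∀ i : Fin n, (s i - (if (i : ℕ) < m then (1:ℝ) else 0)) * ν i
      ≤ (s i - (if (i : ℕ) < m then (1:ℝ) else 0)) * ν q := by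
    intro i
    by_cases hi : (i : ℕ) < m
    · simp only [hi, if_pos]
      have hiq : i ≤ q := by simp [hq, Fin.le_def]; omega
      have := hν hiq
      nlinarith [h1 i]
    · simp only [hi, if_neg, not_false_iff, sub_zero]
      have hqi : q ≤ i := by simp [hq, Fin.le_def]; omega
      have := hν hqi
      nlinarith [h0 i]
  have hsum : (∑ i : Fin n, (s i - (if (i : ℕ) < m then (1:ℝ) else 0)) * ν q) = 0 := by
    have : (∑ i : Fin n, (s i - (if (i : ℕ) < m then (1:ℝ) else 0))) = 0 := by
      rw [Finset.sum_sub_distrib, hs, hind]; ring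
    rw [← Finset.sum_mul, this, zero_mul]
  have h2 : ∑ i : Fin n, ((s i - (if (i : ℕ) < m then (1:ℝ) else 0)) * ν i) ≤ 0 := by
    have h2' := Finset.sum_le_sum (f := fun i : Fin n => (s i - (if (i : ℕ) < m then (1:ℝ) else 0)) * ν i)
      (g := fun i : Fin n => (s i - (if (i : ℕ) < m then (1:ℝ) else 0)) * ν q)
      (fun i (_ : i ∈ Finset.univ) => key i)
    rwa [hsum] at h2'
  have h3 : ∑ i ∈ Finset.univ.filter (fun i : Fin n => (i : ℕ) < m), ν i
      = ∑ i : Fin n, (if (i : ℕ) < m then (1:ℝ) else 0) * ν i := by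
    rw [Finset.sum_filter]
    exact Finset.sum_congr rfl (fun i _ => by by_cases hi : (i : ℕ) < m <;> simp [hi])
  have h4 : ∑ i : Fin n, ((s i - (if (i : ℕ) < m then (1:ℝ) else 0)) * ν i)
      = ∑ i, s i * ν i - ∑ i : Fin n, (if (i : ℕ) < m then (1:ℝ) else 0) * ν i := by
    rw [← Finset.sum_sub_distrib]
    exact Finset.sum_congr rfl (fun i _ => by ring)
  rw [h3]; linarith [h2, h4.symm]

private lemma kyfan_trace {n : ℕ} (ev d : Fin n → ℝ) (h0d : ∀ k, 0 ≤ d k)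
    (h1d : ∀ k, d k ≤ 1) (Z : Matrix (Fin n) (Fin n) ℂ)
    (hZ1 : Z * Zᴴ = 1) (hZ2 : Zᴴ * Z = 1) :
    ∃ s : Fin n → ℝ, (∀ k, 0 ≤ s k) ∧ (∀ k, s k ≤ 1) ∧ (∑ k, s k = ∑ k, d k) ∧
      Matrix.trace (Zᴴ * Matrix.diagonal (fun k => (d k : ℂ)) * Z
          * Matrix.diagonal (fun k => (ev k : ℂ)))
        = ((∑ k, s k * ev k : ℝ) : ℂ) := by
  classical
  have colsum : ∀ k, ∑ l, Complex.normSq (Z l k) = 1 := by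
    intro k
    have h := congrFun (congrFun hZ2 k) k
    simp only [Matrix.mul_apply, Matrix.conjTranspose_apply, Matrix.one_apply_eq] at h
    have h' : (((∑ l, Complex.normSq (Z l k) : ℝ)) : ℂ) = 1 := by
      push_cast
      rw [← h]
      exact Finset.sum_congr rfl (fun l _ => by
        rw [Complex.normSq_eq_conj_mul_self]; rfl)
    exact_mod_cast h'
  have rowsum : ∀ l, ∑ k, Complex.normSq (Z l k) = 1 := by
    intro l
    have h := congrFun (congrFun hZ1 l) l
    simp only [Matrix.mul_apply, Matrix.conjTranspose_apply, Matrix.one_apply_eq] at h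
    have h' : (((∑ k, Complex.normSq (Z l k) : ℝ)) : ℂ) = 1 := by
      push_cast
      rw [← h]
      exact Finset.sum_congr rfl (fun k _ => by
        rw [Complex.normSq_eq_conj_mul_self, mul_comm]; rfl)
    exact_mod_cast h'
  refine ⟨fun k => ∑ l, d l * Complex.normSq (Z l k), ?_, ?_, ?_, ?_⟩
  · intro k
    exact Finset.sum_nonneg fun l _ => mul_nonneg (h0d l) (Complex.normSq_nonneg _)
  · intro k
    calc ∑ l, d l * Complex.normSq (Z l k)
        ≤ ∑ l, Complex.normSq (Z l k) :=
          Finset.sum_le_sum (fun l _ => by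
            nlinarith [Complex.normSq_nonneg (Z l k), h1d l, h0d l])
      _ = 1 := colsum k
  · rw [Finset.sum_comm]
    calc ∑ l, ∑ k, d l * Complex.normSq (Z l k)
        = ∑ l, d l * ∑ k, Complex.normSq (Z l k) := by
          exact Finset.sum_congr rfl (fun l _ => by rw [Finset.mul_sum])
      _ = ∑ l, d l := by
          exact Finset.sum_congr rfl (fun l _ => by rw [rowsum l, mul_one])
  · have hdiag : ∀ k, (Zᴴ * Matrix.diagonal (fun k => (d k : ℂ)) * Z) k k
        = ((∑ l, d l * Complex.normSq (Z l k) : ℝ) : ℂ) := by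
      intro k
      push_cast
      simp only [Matrix.mul_apply, Matrix.conjTranspose_apply, Matrix.diagonal_apply,
        ite_mul, zero_mul, mul_ite, mul_zero, Finset.sum_ite_eq, Finset.sum_ite_eq',
        Finset.mem_univ, if_pos]
      exact Finset.sum_congr rfl (fun l _ => by
        rw [show ((Complex.normSq (Z l k) : ℝ) : ℂ) = star (Z l k) * Z l k from by
          rw [Complex.normSq_eq_conj_mul_self]; rfl]
        ring)
    calc Matrix.trace (Zᴴ * Matrix.diagonal (fun k => (d k : ℂ)) * Z
          * Matrix.diagonal (fun k => (ev k : ℂ)))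
        = ∑ k, (Zᴴ * Matrix.diagonal (fun k => (d k : ℂ)) * Z) k k * (ev k : ℂ) := by
          rw [Matrix.trace]
          exact Finset.sum_congr rfl (fun k _ => by rw [Matrix.diag_apply, Matrix.mul_diagonal])
      _ = ∑ k, ((∑ l, d l * Complex.normSq (Z l k) : ℝ) : ℂ) * (ev k : ℂ) := by
          exact Finset.sum_congr rfl (fun k _ => by rw [hdiag k])
      _ = ((∑ k, (∑ l, d l * Complex.normSq (Z l k)) * ev k : ℝ) : ℂ) := by
          push_cast; rfl

private lemma color_sum_zero {n χ : ℕ} (hχ1 : 1 ≤ χ) (G : SimpleGraph (Fin n))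
    [DecidableRel G.Adj] (c : G.Coloring (Fin χ)) :
    ∑ j ∈ Finset.range χ,
      (Matrix.diagonal (fun v : Fin n => Complex.exp (2 * Real.pi * Complex.I / χ) ^ (j * (c v : ℕ))))
        * (G.adjMatrix ℂ)
        * (Matrix.diagonal (fun v : Fin n => Complex.exp (2 * Real.pi * Complex.I / χ) ^ (j * (c v : ℕ))))ᴴ
      = 0 := by
  classical
  set ω : ℂ := Complex.exp (2 * Real.pi * Complex.I / χ) with hω
  have hprim : IsPrimitiveRoot ω χ := Complex.isPrimitiveRoot_exp χ (by omega)
  have habs : ‖ω‖ = 1 := by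
    rw [hω, show (2 * (Real.pi : ℂ) * Complex.I / χ) = ((2 * Real.pi / χ : ℝ) : ℂ) * Complex.I
      from by push_cast; ring]
    exact Complex.norm_exp_ofReal_mul_I _
  have hsω : star ω * ω = 1 := by
    rw [show star ω = (starRingEnd ℂ) ω from rfl, mul_comm, Complex.mul_conj,
      Complex.normSq_eq_norm_sq, habs]
    norm_num
  ext u v
  simp only [Finset.sum_apply, Matrix.sum_apply, Matrix.diagonal_conjTranspose,
    Matrix.mul_diagonal, Matrix.diagonal_mul, Matrix.zero_apply, Pi.star_apply]
  by_cases hadj : G.Adj u v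
  · have hne : (c u : ℕ) ≠ (c v : ℕ) := by
      intro h
      exact c.valid hadj (Fin.val_injective h)
    set a := (c u : ℕ); set b := (c v : ℕ)
    have ha : a < χ := (c u).isLt
    have hb : b < χ := (c v).isLt
    set z : ℂ := ω ^ a * (star ω) ^ b with hz
    have hterm : ∀ j, ω ^ (j * a) * G.adjMatrix ℂ u v * star (ω ^ (j * b))
        = G.adjMatrix ℂ u v * z ^ j := by
      intro j
      rw [star_pow, hz, mul_pow, ← pow_mul, ← pow_mul, mul_comm a j, mul_comm b j]
      ring
    rw [Finset.sum_congr rfl (fun j _ => hterm j), ← Finset.mul_sum]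
    have hz1 : z ≠ 1 := by
      intro h
      have hzb : z * ω ^ b = ω ^ a := by
        rw [hz, mul_assoc, ← mul_pow, hsω, one_pow, mul_one]
      rw [h, one_mul] at hzb
      exact hne (hprim.pow_inj ha hb hzb.symm)
    have hzχ : z ^ χ = 1 := by
      rw [hz, mul_pow, ← pow_mul, ← pow_mul, mul_comm a χ, mul_comm b χ, pow_mul, pow_mul,
        hprim.pow_eq_one, ← star_pow, hprim.pow_eq_one]
      simp
    rw [geom_sum_eq hz1, hzχ]
    simp
  · simp [SimpleGraph.adjMatrix_apply, hadj]

private lemma det_char {𝕜 : Type*} [RCLike 𝕜] {n : ℕ} {M : Matrix (Fin n) (Fin n) 𝕜}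
    (hM : M.IsHermitian) (x : 𝕜) :
    Matrix.det (x • (1 : Matrix (Fin n) (Fin n) 𝕜) - M) = ∏ i, (x - (hM.eigenvalues i : 𝕜)) := by
  classical
  set V : Matrix (Fin n) (Fin n) 𝕜 := (hM.eigenvectorUnitary : Matrix (Fin n) (Fin n) 𝕜) with hV
  have hV1 : V * Vᴴ = 1 := by
    rw [← Matrix.star_eq_conjTranspose]
    exact (Matrix.mem_unitaryGroup_iff).mp hM.eigenvectorUnitary.2
  have hV2 : Vᴴ * V = 1 := by
    rw [← Matrix.star_eq_conjTranspose]
    exact (Matrix.mem_unitaryGroup_iff').mp hM.eigenvectorUnitary.2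
  have hspec : M = V * Matrix.diagonal (RCLike.ofReal ∘ hM.eigenvalues) * Vᴴ := by
    rw [← Matrix.star_eq_conjTranspose]
    exact hM.spectral_theorem
  have hkey : x • (1 : Matrix (Fin n) (Fin n) 𝕜) - M
      = V * (Matrix.diagonal (fun i => x - (hM.eigenvalues i : 𝕜))) * Vᴴ := by
    have hd : Matrix.diagonal (fun i => x - (hM.eigenvalues i : 𝕜))
        = x • (1 : Matrix (Fin n) (Fin n) 𝕜) - Matrix.diagonal (RCLike.ofReal ∘ hM.eigenvalues) := by
      rw [← Matrix.diagonal_one, ← Matrix.diagonal_smul, Matrix.diagonal_sub]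
      congr! 1 with i
      simp
    rw [hd, Matrix.mul_sub, Matrix.sub_mul, ← hspec]
    congr 1
    rw [Matrix.mul_smul, mul_one, Matrix.smul_mul, hV1]
  rw [hkey, Matrix.det_mul, Matrix.det_mul, mul_comm (V.det), mul_assoc, ← Matrix.det_mul, hV1]
  simp [Matrix.det_diagonal]

private lemma multiset_map_perm {n : ℕ} (f : Fin n → ℝ) (e : Equiv.Perm (Fin n)) :
    Multiset.map (f ∘ e) Finset.univ.val = Multiset.map f Finset.univ.val := by
  have h : Multiset.map (⇑e) Finset.univ.val = Finset.univ.val := by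
    have := Finset.map_univ_equiv e
    calc Multiset.map (⇑e) Finset.univ.val = (Finset.univ.map e.toEmbedding).val := by
          rw [Finset.map_val]; rfl
      _ = Finset.univ.val := by rw [this]
  calc Multiset.map (f ∘ e) Finset.univ.val
      = Multiset.map f (Multiset.map (⇑e) Finset.univ.val) := (Multiset.map_map f (⇑e) _).symm
    _ = Multiset.map f Finset.univ.val := by rw [h]

private lemma ofFn_coe {n : ℕ} (f : Fin n → ℝ) :
    (↑(List.ofFn f) : Multiset ℝ) = Multiset.map f Finset.univ.val := by
  rw [List.ofFn_eq_map]
  rfl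

private lemma exists_comp_perm {n : ℕ} (f g : Fin n → ℝ)
    (h : Multiset.map f Finset.univ.val = Multiset.map g Finset.univ.val) :
    ∃ e : Equiv.Perm (Fin n), f = g ∘ e := by
  classical
  set σf := Tuple.sort f
  set σg := Tuple.sort g
  have hmf : Monotone (f ∘ σf) := Tuple.monotone_sort f
  have hmg : Monotone (g ∘ σg) := Tuple.monotone_sort g
  have hperm : (List.ofFn (f ∘ σf)).Perm (List.ofFn (g ∘ σg)) := by
    rw [← Multiset.coe_eq_coe, ofFn_coe, ofFn_coe, multiset_map_perm, multiset_map_perm, h]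
  have heq : List.ofFn (f ∘ σf) = List.ofFn (g ∘ σg) :=
    List.Perm.eq_of_sortedLE (List.sortedLE_ofFn_iff.mpr hmf)
      (List.sortedLE_ofFn_iff.mpr hmg) hperm
  have hfun : f ∘ σf = g ∘ σg := List.ofFn_injective heq
  refine ⟨σf.symm.trans σg, ?_⟩
  funext i
  have := congrFun hfun (σf.symm i)
  simpa using this

private lemma ev_transfer {n : ℕ} (G : SimpleGraph (Fin n)) [DecidableRel G.Adj]
    (hA : (G.adjMatrix ℝ).IsHermitian) (hB : (G.adjMatrix ℂ).IsHermitian) :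
    Multiset.map hA.eigenvalues Finset.univ.val
      = Multiset.map hB.eigenvalues Finset.univ.val := by
  classical
  have hdet : ∀ x : ℝ, ∏ i, (x - hA.eigenvalues i) = ∏ i, (x - hB.eigenvalues i) := by
    intro x
    apply Complex.ofReal_injective
    have h1 : Matrix.det (x • (1 : Matrix (Fin n) (Fin n) ℝ) - G.adjMatrix ℝ)
        = ∏ i, (x - hA.eigenvalues i) := by
      rw [det_char hA x]
      exact Finset.prod_congr rfl fun i _ => rfl
    have h2 : ((x : ℂ) • (1 : Matrix (Fin n) (Fin n) ℂ) - G.adjMatrix ℂ)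
        = (x • (1 : Matrix (Fin n) (Fin n) ℝ) - G.adjMatrix ℝ).map (algebraMap ℝ ℂ) := by
      ext u v
      simp only [Matrix.map_apply, Matrix.sub_apply, Matrix.smul_apply, Matrix.one_apply,
        SimpleGraph.adjMatrix_apply, smul_eq_mul]
      by_cases h : u = v <;> by_cases h' : G.Adj u v <;> simp [h, h']
    have h3 : Matrix.det ((x : ℂ) • (1 : Matrix (Fin n) (Fin n) ℂ) - G.adjMatrix ℂ)
        = algebraMap ℝ ℂ (Matrix.det (x • (1 : Matrix (Fin n) (Fin n) ℝ) - G.adjMatrix ℝ)) := by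
      rw [h2, ← RingHom.mapMatrix_apply, ← RingHom.map_det]
    have h4 := det_char hB ((x : ℝ) : ℂ)
    calc ((∏ i, (x - hA.eigenvalues i) : ℝ) : ℂ)
        = algebraMap ℝ ℂ (Matrix.det (x • (1 : Matrix (Fin n) (Fin n) ℝ) - G.adjMatrix ℝ)) := by
          rw [h1]; rfl
      _ = Matrix.det ((x : ℂ) • (1 : Matrix (Fin n) (Fin n) ℂ) - G.adjMatrix ℂ) := h3.symm
      _ = ((∏ i, (x - hB.eigenvalues i) : ℝ) : ℂ) := by
          rw [h4]; push_cast
          exact Finset.prod_congr rfl fun i _ => rfl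
  have hpoly : ∏ i, (Polynomial.X - Polynomial.C (hA.eigenvalues i))
      = ∏ i, (Polynomial.X - Polynomial.C (hB.eigenvalues i)) := by
    apply Polynomial.funext
    intro x
    simpa [Polynomial.eval_prod] using hdet x
  have hroots : ∀ f : Fin n → ℝ,
      (∏ i, (Polynomial.X - Polynomial.C (f i))).roots = Multiset.map f Finset.univ.val := by
    intro f
    have h := Polynomial.roots_multiset_prod_X_sub_C (Multiset.map f Finset.univ.val)
    rw [Multiset.map_map] at h
    rw [Finset.prod_eq_multiset_prod]
    exact h
  rw [← hroots hA.eigenvalues, ← hroots hB.eigenvalues, hpoly]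

private lemma trace_sandwich {n : ℕ} (V Dd De W : Matrix (Fin n) (Fin n) ℂ) :
    Matrix.trace ((V * Dd * Vᴴ) * (W * (V * De * Vᴴ) * Wᴴ))
      = Matrix.trace ((Vᴴ * W * V)ᴴ * Dd * (Vᴴ * W * V) * De) := by
  have hY : (Vᴴ * W * V)ᴴ = Vᴴ * Wᴴ * V := by
    simp only [Matrix.conjTranspose_mul, Matrix.conjTranspose_conjTranspose, mul_assoc]
  rw [hY]
  have h1 : (V * Dd * Vᴴ) * (W * (V * De * Vᴴ) * Wᴴ)
      = (V * (Dd * (Vᴴ * (W * (V * De))))) * (Vᴴ * Wᴴ) := by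
    simp only [mul_assoc]
  rw [h1, Matrix.trace_mul_comm]
  congr 1
  simp only [mul_assoc]

private lemma trace_center {n : ℕ} (V Dd De : Matrix (Fin n) (Fin n) ℂ)
    (hV2 : Vᴴ * V = 1) :
    Matrix.trace ((V * Dd * Vᴴ) * (V * De * Vᴴ)) = Matrix.trace (Dd * De) := by
  have h1 : (V * Dd * Vᴴ) * (V * De * Vᴴ) = (V * (Dd * ((Vᴴ * V) * De))) * Vᴴ := by
    simp only [mul_assoc]
  rw [h1, hV2, one_mul, Matrix.trace_mul_comm, ← mul_assoc, hV2, one_mul]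

private lemma conj_unitary {n : ℕ} (V W : Matrix (Fin n) (Fin n) ℂ)
    (hV1 : V * Vᴴ = 1) (hV2 : Vᴴ * V = 1) (hW1 : W * Wᴴ = 1) (hW2 : Wᴴ * W = 1) :
    (Vᴴ * W * V) * (Vᴴ * W * V)ᴴ = 1 ∧ (Vᴴ * W * V)ᴴ * (Vᴴ * W * V) = 1 := by
  have hY : (Vᴴ * W * V)ᴴ = Vᴴ * Wᴴ * V := by
    simp only [Matrix.conjTranspose_mul, Matrix.conjTranspose_conjTranspose, mul_assoc]
  constructor
  · rw [hY]
    calc (Vᴴ * W * V) * (Vᴴ * Wᴴ * V) = Vᴴ * (W * ((V * Vᴴ) * (Wᴴ * V))) := by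
          simp only [mul_assoc]
      _ = Vᴴ * ((W * Wᴴ) * V) := by rw [hV1, one_mul]; simp only [mul_assoc]
      _ = 1 := by rw [hW1, one_mul, hV2]
  · rw [hY]
    calc (Vᴴ * Wᴴ * V) * (Vᴴ * W * V) = Vᴴ * (Wᴴ * ((V * Vᴴ) * (W * V))) := by
          simp only [mul_assoc]
      _ = Vᴴ * ((Wᴴ * W) * V) := by rw [hV1, one_mul]; simp only [mul_assoc]
      _ = 1 := by rw [hW2, one_mul, hV2]

/-- **Generalized Hoffman bound.** For a finite simple graph `G` on `n` vertices with at least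
one edge and chromatic number `χ`, for every `1 ≤ m ≤ n`:
`Σ_{i=1}^m μ_i ≤ (χ - 1)·Σ_{i=1}^m (-μ_{n+1-i})`, and whenever `Σ_{i=1}^m (-μ_{n+1-i}) > 0`
one has `χ ≥ 1 + (Σ_{i=1}^m μ_i)/(Σ_{i=1}^m (-μ_{n+1-i}))`.
Here `μ` is the non-increasing enumeration of the adjacency eigenvalues; the top `m`
eigenvalues are those with index `< m` and the bottom `m` are those with index `≥ n - m`. -/
theorem stmt_8 {n : ℕ} (hn : 0 < n) (G : SimpleGraph (Fin n)) [DecidableRel G.Adj]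
    (he : ∃ v w : Fin n, G.Adj v w)
    (χ : ℕ) (hχ : G.chromaticNumber = (χ : ℕ∞))
    (hA : (G.adjMatrix ℝ).IsHermitian)
    (μ : Fin n → ℝ) (hμa : Antitone μ)
    (hμ : ∃ e : Equiv.Perm (Fin n), μ = hA.eigenvalues ∘ e)
    (m : ℕ) (hm1 : 1 ≤ m) (hmn : m ≤ n) :
    (∑ i ∈ Finset.univ.filter (fun i : Fin n => (i : ℕ) < m), μ i) ≤
      ((χ : ℝ) - 1) * (∑ i ∈ Finset.univ.filter (fun i : Fin n => n - m ≤ (i : ℕ)), -μ i) ∧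
    (0 < (∑ i ∈ Finset.univ.filter (fun i : Fin n => n - m ≤ (i : ℕ)), -μ i) →
      (χ : ℝ) ≥ 1 + (∑ i ∈ Finset.univ.filter (fun i : Fin n => (i : ℕ) < m), μ i) /
        (∑ i ∈ Finset.univ.filter (fun i : Fin n => n - m ≤ (i : ℕ)), -μ i)) := by
  classical
  set B : Matrix (Fin n) (Fin n) ℂ := G.adjMatrix ℂ with hBdef
  have hB : B.IsHermitian := by
    rw [Matrix.IsHermitian]
    ext u v
    simp only [hBdef, Matrix.conjTranspose_apply, SimpleGraph.adjMatrix_apply]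
    by_cases h : G.Adj u v <;> simp [h, G.adj_comm v u]
  obtain ⟨e0, he0⟩ := hμ
  have hmult : Multiset.map μ Finset.univ.val = Multiset.map hB.eigenvalues Finset.univ.val := by
    rw [he0, multiset_map_perm hA.eigenvalues e0]
    exact ev_transfer G hA hB
  obtain ⟨e, hev⟩ := exists_comp_perm μ hB.eigenvalues hmult
  -- coloring
  have hcol : G.Colorable χ := SimpleGraph.chromaticNumber_le_iff_colorable.mp (le_of_eq hχ)
  obtain ⟨c⟩ := hcol
  have hχ1 : 1 ≤ χ := by
    by_contra h
    have hχ0 : χ = 0 := by omega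
    subst hχ0
    exact (c ⟨0, hn⟩).elim0
  -- spectral data
  set V : Matrix (Fin n) (Fin n) ℂ := (hB.eigenvectorUnitary : Matrix (Fin n) (Fin n) ℂ)
    with hVdef
  have hV1 : V * Vᴴ = 1 := by
    rw [← Matrix.star_eq_conjTranspose]
    exact (Matrix.mem_unitaryGroup_iff).mp hB.eigenvectorUnitary.2
  have hV2 : Vᴴ * V = 1 := by
    rw [← Matrix.star_eq_conjTranspose]
    exact (Matrix.mem_unitaryGroup_iff').mp hB.eigenvectorUnitary.2
  have hspec : B = V * Matrix.diagonal (fun k => ((hB.eigenvalues k : ℝ) : ℂ)) * Vᴴ := by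
    rw [← Matrix.star_eq_conjTranspose]
    exact hB.spectral_theorem
  set d : Fin n → ℝ := fun k => if ((e.symm k : Fin n) : ℕ) < m then 1 else 0 with hddef
  have h0d : ∀ k, 0 ≤ d k := fun k => by
    by_cases h : ((e.symm k : Fin n) : ℕ) < m <;> simp [hddef, h]
  have h1d : ∀ k, d k ≤ 1 := fun k => by
    by_cases h : ((e.symm k : Fin n) : ℕ) < m <;> simp [hddef, h]
  have hde : ∀ i : Fin n, d (e i) = if (i : ℕ) < m then (1:ℝ) else 0 := fun i => by
    simp [hddef]
  have hsumd : ∑ k, d k = m := by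
    rw [← Equiv.sum_comp e (fun k => d k), Finset.sum_congr rfl (fun i _ => hde i),
      Finset.sum_ite, Finset.sum_const, Finset.sum_const, card_flt hmn]
    simp
  set Dd : Matrix (Fin n) (Fin n) ℂ := Matrix.diagonal (fun k => (d k : ℂ)) with hDddef
  set De : Matrix (Fin n) (Fin n) ℂ :=
    Matrix.diagonal (fun k => ((hB.eigenvalues k : ℝ) : ℂ)) with hDedef
  set P : Matrix (Fin n) (Fin n) ℂ := V * Dd * Vᴴ with hPdef
  -- roots of unity diagonal unitaries
  set ω : ℂ := Complex.exp (2 * Real.pi * Complex.I / χ) with hωdef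
  have habs : ‖ω‖ = 1 := by
    rw [hωdef, show (2 * (Real.pi : ℂ) * Complex.I / χ) = ((2 * Real.pi / χ : ℝ) : ℂ) * Complex.I
      from by push_cast; ring]
    exact Complex.norm_exp_ofReal_mul_I _
  have hsω : star ω * ω = 1 := by
    rw [show star ω = (starRingEnd ℂ) ω from rfl, mul_comm, Complex.mul_conj,
      Complex.normSq_eq_norm_sq, habs]
    norm_num
  set Dj : ℕ → Matrix (Fin n) (Fin n) ℂ :=
    fun j => Matrix.diagonal (fun v : Fin n => ω ^ (j * (c v : ℕ))) with hDjdef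
  have hunit : ∀ k : ℕ, ω ^ k * star (ω ^ k) = 1 := by
    intro k
    rw [star_pow, ← mul_pow, mul_comm ω (star ω), hsω, one_pow]
  have hDj1 : ∀ j, Dj j * (Dj j)ᴴ = 1 := by
    intro j
    rw [hDjdef]
    simp only [Matrix.diagonal_conjTranspose, Matrix.diagonal_mul_diagonal]
    rw [show (fun v : Fin n => ω ^ (j * (c v : ℕ)) * (star fun v : Fin n => ω ^ (j * (c v : ℕ))) v)
      = fun _ => (1:ℂ) from funext fun v => by simpa using hunit (j * (c v : ℕ))]
    exact Matrix.diagonal_one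
  have hDj2 : ∀ j, (Dj j)ᴴ * Dj j = 1 := by
    intro j
    rw [hDjdef]
    simp only [Matrix.diagonal_conjTranspose, Matrix.diagonal_mul_diagonal]
    rw [show (fun v : Fin n => (star fun v : Fin n => ω ^ (j * (c v : ℕ))) v * ω ^ (j * (c v : ℕ)))
      = fun _ => (1:ℂ) from funext fun v => by
        simpa [mul_comm] using hunit (j * (c v : ℕ))]
    exact Matrix.diagonal_one
  -- key sums
  set L : ℝ := ∑ i ∈ Finset.univ.filter (fun i : Fin n => (i : ℕ) < m), μ i with hLdef
  set T : ℝ := ∑ i ∈ Finset.univ.filter (fun i : Fin n => n - m ≤ (i : ℕ)), μ i with hTdef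
  -- trace(P * B) = L
  have htrace0 : Matrix.trace (P * B) = ((L : ℝ) : ℂ) := by
    rw [hspec, hPdef, trace_center V Dd De hV2, hDddef, hDedef,
      Matrix.diagonal_mul_diagonal, Matrix.trace_diagonal]
    have h1 : ∀ k : Fin n, (d k : ℂ) * ((hB.eigenvalues k : ℝ) : ℂ)
        = (((d k * hB.eigenvalues k : ℝ)) : ℂ) := fun k => by push_cast; ring
    rw [Finset.sum_congr rfl (fun k _ => h1 k), ← Complex.ofReal_sum]
    congr 1
    rw [← Equiv.sum_comp e (fun k => d k * hB.eigenvalues k)]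
    rw [hLdef, Finset.sum_filter]
    refine Finset.sum_congr rfl (fun i _ => ?_)
    rw [hde i, show hB.eigenvalues (e i) = μ i from (congrFun hev i).symm]
    by_cases h : (i : ℕ) < m <;> simp [h]
  -- decomposition of B via the coloring
  have h0 := color_sum_zero hχ1 G c
  rw [Finset.range_eq_Ico, Finset.sum_eq_sum_Ico_succ_bot (by omega : 0 < χ)] at h0
  have hD0 : Matrix.diagonal
      (fun v : Fin n => Complex.exp (2 * Real.pi * Complex.I / χ) ^ (0 * (c v : ℕ))) = 1 := by
    simp
  rw [hD0, one_mul, Matrix.conjTranspose_one, mul_one] at h0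
  -- h0 : B + ∑ j in Ico 1 χ, Dj j * B * (Dj j)ᴴ = 0 (up to defn of Dj, ω)
  have h0' : B + ∑ j ∈ Finset.Ico 1 χ, Dj j * B * (Dj j)ᴴ = 0 := h0
  -- Ky Fan bound for each j
  have hT : ∀ j ∈ Finset.Ico 1 χ, ∃ r : ℝ,
      Matrix.trace (P * (Dj j * B * (Dj j)ᴴ)) = ((r : ℝ) : ℂ) ∧ T ≤ r := by
    intro j hj
    obtain ⟨hY1, hY2⟩ := conj_unitary V (Dj j) hV1 hV2 (hDj1 j) (hDj2 j)
    obtain ⟨s, hs0, hs1, hssum, hstr⟩ :=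
      kyfan_trace hB.eigenvalues d h0d h1d (Vᴴ * Dj j * V) hY1 hY2
    refine ⟨∑ k, s k * hB.eigenvalues k, ?_, ?_⟩
    · have hrw : P * (Dj j * B * (Dj j)ᴴ)
          = (V * Dd * Vᴴ) * (Dj j * (V * De * Vᴴ) * (Dj j)ᴴ) := by
        rw [hspec, hPdef]
      rw [hrw, trace_sandwich V Dd De (Dj j)]
      exact hstr
    · have hre : ∑ k, s k * hB.eigenvalues k = ∑ i, s (e i) * μ i := by
        rw [← Equiv.sum_comp e (fun k => s k * hB.eigenvalues k)]
        exact Finset.sum_congr rfl fun i _ => by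
          rw [show hB.eigenvalues (e i) = μ i from (congrFun hev i).symm]
      rw [hre]
      exact maj_lower hm1 hmn μ hμa (fun i => s (e i)) (fun i => hs0 _) (fun i => hs1 _)
        (by rw [Equiv.sum_comp e s, hssum, hsumd])
  choose! r hr1 hr2 using hT
  -- main identity
  have hzero' : ((L : ℝ) : ℂ) + ∑ j ∈ Finset.Ico 1 χ, ((r j : ℝ) : ℂ) = 0 := by
    rw [← htrace0, ← Finset.sum_congr rfl (fun j hj => hr1 j hj)]
    calc Matrix.trace (P * B) + ∑ j ∈ Finset.Ico 1 χ, Matrix.trace (P * (Dj j * B * (Dj j)ᴴ))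
        = Matrix.trace (P * (B + ∑ j ∈ Finset.Ico 1 χ, Dj j * B * (Dj j)ᴴ)) := by
          rw [Matrix.mul_add, Matrix.trace_add, Finset.mul_sum, Matrix.trace_sum]
      _ = 0 := by rw [h0', Matrix.mul_zero, Matrix.trace_zero]
  have hLr : L = - ∑ j ∈ Finset.Ico 1 χ, r j := by
    have h2 : ((L + ∑ j ∈ Finset.Ico 1 χ, r j : ℝ) : ℂ) = 0 := by
      push_cast
      exact hzero'
    have h3 : L + ∑ j ∈ Finset.Ico 1 χ, r j = 0 := by exact_mod_cast h2
    linarith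
  have hTbound : (Finset.Ico 1 χ).card • T ≤ ∑ j ∈ Finset.Ico 1 χ, r j :=
    Finset.card_nsmul_le_sum _ _ _ (fun j hj => hr2 j hj)
  have hcard : (Finset.Ico 1 χ).card = χ - 1 := Nat.card_Ico 1 χ
  have hneg : ∑ i ∈ Finset.univ.filter (fun i : Fin n => n - m ≤ (i : ℕ)), -μ i = -T := by
    rw [hTdef, ← Finset.sum_neg_distrib]
  have hgoal1 : L ≤ ((χ : ℝ) - 1) * (-T) := by
    have h5 : ((χ - 1 : ℕ) : ℝ) * T ≤ ∑ j ∈ Finset.Ico 1 χ, r j := by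
      have := hTbound
      rwa [hcard, nsmul_eq_mul] at this
    have h6 : ((χ : ℝ) - 1) = ((χ - 1 : ℕ) : ℝ) := by
      rw [Nat.cast_sub hχ1, Nat.cast_one]
    rw [h6, hLr]
    nlinarith
  constructor
  · rw [hneg]
    exact hgoal1
  · intro hS
    rw [hneg] at hS ⊢
    have h7 : L / (-T) ≤ (χ : ℝ) - 1 := by
      rw [div_le_iff₀ hS]
      linarith [hgoal1]
    rw [ge_iff_le]
    linarith
end
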